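/- arXiv:1708.03930 — 9 statements merged into one kernel-verified Lean document; each statement's English description precedes it below -/
import Mathlib

section
/- Let m and n be relatively prime positive integers. Then |S_{mn}| = |S_m| · |S_n|, where |A| denotes the cardinality of the finite set A. -/
/-- `S_n`: the set of elements of `ℤ/nℤ` expressible as a sum of two squares. -/
def sumTwoSquares (n : ℕ) : Set (ZMod n) := {m | ∃ x y : ZMod n, m = x ^ 2 + y ^ 2}

/-- For coprime positive integers `m, n`, `|S_{mn}| = |S_m| ⬝ |S_n|`. -/
theorem card_sumTwoSquares_mul (m n : ℕ) (hm : 0 < m) (hn : 0 < n)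
    (hco : Nat.Coprime m n) :
    Nat.card (sumTwoSquares (m * n)) =
      Nat.card (sumTwoSquares m) * Nat.card (sumTwoSquares n) := by
  let e := ZMod.chineseRemainder hco
  have key : (e : ZMod (m * n) → ZMod m × ZMod n) '' sumTwoSquares (m * n)
      = (sumTwoSquares m) ×ˢ (sumTwoSquares n) := by
    ext p
    simp only [Set.mem_image, Set.mem_prod, sumTwoSquares, Set.mem_setOf_eq]
    constructor
    · rintro ⟨a, ⟨x, y, rfl⟩, rfl⟩
      exact ⟨⟨(e x).1, (e y).1, by simp⟩, ⟨(e x).2, (e y).2, by simp⟩⟩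
    · rintro ⟨⟨x1, y1, h1⟩, ⟨x2, y2, h2⟩⟩
      refine ⟨e.symm (x1, x2) ^ 2 + e.symm (y1, y2) ^ 2, ⟨_, _, rfl⟩, ?_⟩
      simp only [map_add, map_pow, RingEquiv.apply_symm_apply]
      ext <;> simp [h1, h2, Prod.pow_fst, Prod.pow_snd]
  have h1 : Nat.card (sumTwoSquares (m * n))
      = Nat.card ((sumTwoSquares m) ×ˢ (sumTwoSquares n) : Set (ZMod m × ZMod n)) := by
    rw [← key, Nat.card_image_of_injective e.injective]
  rw [h1, Nat.card_congr (Equiv.Set.prod _ _), Nat.card_prod]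
end

section
/- Let m and n be relatively prime positive integers. Then |N_{mn}| = n·|N_m| + m·|N_n| − |N_m|·|N_n|. -/
/-- `N_n`: the set of elements of `ℤ/nℤ` not expressible as a sum of two squares. -/
def notSumTwoSquares (n : ℕ) : Set (ZMod n) := (sumTwoSquares n)ᶜ

lemma image_sumTwoSquares (m n : ℕ) (hco : Nat.Coprime m n) :
    (ZMod.chineseRemainder hco) '' sumTwoSquares (m * n)
      = sumTwoSquares m ×ˢ sumTwoSquares n := by
  set e := ZMod.chineseRemainder hco
  ext ⟨a, b⟩
  constructor
  · rintro ⟨z, ⟨x, y, rfl⟩, heq⟩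
    rw [← heq]
    exact ⟨⟨(e x).1, (e y).1, by simp [Prod.fst_add, Prod.pow_fst]⟩,
      ⟨(e x).2, (e y).2, by simp [Prod.snd_add, Prod.pow_snd]⟩⟩
  · rintro ⟨⟨x1, y1, h1⟩, ⟨x2, y2, h2⟩⟩
    refine ⟨e.symm (a, b), ⟨e.symm (x1, x2), e.symm (y1, y2), ?_⟩, by simp⟩
    apply e.injective
    simp only [map_add, map_pow, RingEquiv.apply_symm_apply, Prod.ext_iff, Prod.fst_add,
      Prod.snd_add, Prod.pow_fst, Prod.pow_snd]
    exact ⟨h1, h2⟩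

/-- For coprime positive integers `m, n`,
`|N_{mn}| = n⬝|N_m| + m⬝|N_n| − |N_m|⬝|N_n|`. -/
theorem card_notSumTwoSquares_mul (m n : ℕ) (hm : 0 < m) (hn : 0 < n)
    (hco : Nat.Coprime m n) :
    (Nat.card (notSumTwoSquares (m * n)) : ℤ) =
      n * Nat.card (notSumTwoSquares m) + m * Nat.card (notSumTwoSquares n) -
        Nat.card (notSumTwoSquares m) * Nat.card (notSumTwoSquares n) := by
  haveI : NeZero m := ⟨hm.ne'⟩
  haveI : NeZero n := ⟨hn.ne'⟩
  haveI : NeZero (m * n) := ⟨Nat.mul_ne_zero hm.ne' hn.ne'⟩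
  set e := ZMod.chineseRemainder hco
  have himg : e '' notSumTwoSquares (m * n) = (sumTwoSquares m ×ˢ sumTwoSquares n)ᶜ := by
    rw [notSumTwoSquares, Set.image_compl_eq (EquivLike.bijective e),
      image_sumTwoSquares m n hco]
  -- cardinalities
  have hcard : Nat.card (notSumTwoSquares (m * n))
      = Nat.card (((sumTwoSquares m ×ˢ sumTwoSquares n)ᶜ : Set (ZMod m × ZMod n))) := by
    rw [← himg]
    exact Nat.card_congr (Equiv.Set.image e _ e.injective)
  have hprod : Nat.card ((sumTwoSquares m ×ˢ sumTwoSquares n : Set (ZMod m × ZMod n)))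
      = Nat.card (sumTwoSquares m) * Nat.card (sumTwoSquares n) := by
    rw [Nat.card_congr (Equiv.Set.prod _ _), Nat.card_prod]
  -- complements
  have hSm : Nat.card (sumTwoSquares m) + Nat.card (notSumTwoSquares m) = m := by
    have := Set.ncard_add_ncard_compl (sumTwoSquares m)
    simpa [Nat.card_coe_set_eq, notSumTwoSquares, Nat.card_zmod] using this
  have hSn : Nat.card (sumTwoSquares n) + Nat.card (notSumTwoSquares n) = n := by
    have := Set.ncard_add_ncard_compl (sumTwoSquares n)
    simpa [Nat.card_coe_set_eq, notSumTwoSquares, Nat.card_zmod] using this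
  have hC : Nat.card (((sumTwoSquares m ×ˢ sumTwoSquares n)ᶜ : Set (ZMod m × ZMod n)))
      + Nat.card (sumTwoSquares m) * Nat.card (sumTwoSquares n) = m * n := by
    have := Set.ncard_add_ncard_compl (sumTwoSquares m ×ˢ sumTwoSquares n)
    rw [Nat.card_coe_set_eq, Nat.card_coe_set_eq] at hprod ⊢
    rw [add_comm] at this
    simpa [hprod, Nat.card_prod, Nat.card_zmod] using this
  -- arithmetic over ℤ
  have h1 : (Nat.card (sumTwoSquares m) : ℤ) = m - Nat.card (notSumTwoSquares m) := by
    have := congrArg (Nat.cast (R := ℤ)) hSm; push_cast at this; linarith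
  have h2 : (Nat.card (sumTwoSquares n) : ℤ) = n - Nat.card (notSumTwoSquares n) := by
    have := congrArg (Nat.cast (R := ℤ)) hSn; push_cast at this; linarith
  have h3 := congrArg (Nat.cast (R := ℤ)) hC
  push_cast at h3
  rw [hcard]
  rw [h1, h2] at h3
  nlinarith [h3]
end

section
/- Let m_1, m_2, ..., m_k be pairwise relatively prime positive integers and n = m_1 · m_2 · ... · m_k. Then r(N_n) = 1 − ∏_{i=1}^k (1 − r(N_{m_i})). -/
/-- The density `r(A) = |A| / n` of a subset `A ⊆ ℤ/nℤ`, as a rational number. -/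
noncomputable def dens (n : ℕ) (A : Set (ZMod n)) : ℚ := (Nat.card A : ℚ) / n

lemma dens_compl (n : ℕ) (hn : 0 < n) (A : Set (ZMod n)) :
    dens n Aᶜ = 1 - dens n A := by
  have : NeZero n := ⟨hn.ne'⟩
  have hA : A.Finite := Set.toFinite _
  have h := Set.ncard_add_ncard_compl A
  rw [Nat.card_zmod] at h
  have h1 : Nat.card (Aᶜ : Set (ZMod n)) = n - Nat.card A := by
    rw [Nat.card_coe_set_eq, Nat.card_coe_set_eq]; omega
  have h2 : Nat.card A ≤ n := by
    rw [Nat.card_coe_set_eq]; omega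
  unfold dens
  rw [h1]
  have : ((n - Nat.card A : ℕ) : ℚ) = (n : ℚ) - Nat.card A := by
    push_cast [Nat.cast_sub h2]; ring
  rw [this]
  field_simp

lemma card_sumTwoSquares_prod (k : ℕ) (m : Fin k → ℕ)
    (hco : Pairwise (Function.onFun Nat.Coprime m)) :
    Nat.card (sumTwoSquares (∏ i, m i)) = ∏ i, Nat.card (sumTwoSquares (m i)) := by
  classical
  set e := ZMod.prodEquivPi m hco with he
  set T : Set (∀ i, ZMod (m i)) := {v | ∃ x y, v = x ^ 2 + y ^ 2} with hTdef
  have himg : e '' sumTwoSquares (∏ i, m i) = T := by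
    ext v
    constructor
    · rintro ⟨u, ⟨x, y, rfl⟩, rfl⟩
      exact ⟨e x, e y, by simp [map_add, map_pow]⟩
    · rintro ⟨x, y, rfl⟩
      exact ⟨e.symm x ^ 2 + e.symm y ^ 2, ⟨e.symm x, e.symm y, rfl⟩, by simp⟩
  have hT : T = Set.univ.pi (fun i => sumTwoSquares (m i)) := by
    ext v
    simp only [hTdef, Set.mem_pi, Set.mem_univ, forall_true_left, Set.mem_setOf_eq]
    constructor
    · rintro ⟨x, y, rfl⟩ i; exact ⟨x i, y i, rfl⟩
    · intro h
      choose x y hxy using h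
      exact ⟨x, y, funext hxy⟩
  have h1 : Nat.card (sumTwoSquares (∏ i, m i)) = Nat.card T := by
    rw [← himg]
    exact Nat.card_congr (Equiv.Set.image e _ e.injective)
  rw [h1, hT, Nat.card_congr (Equiv.Set.univPi _), Nat.card_pi]


/-- If `m 1, …, m k` are pairwise coprime positive integers with product `n`, then
`r(N_n) = 1 − ∏ i, (1 − r(N_{m i}))`. -/
theorem dens_notSumTwoSquares_prod (k : ℕ) (m : Fin k → ℕ) (hm : ∀ i, 0 < m i)
    (hco : ∀ i j, i ≠ j → Nat.Coprime (m i) (m j)) (n : ℕ) (hn : n = ∏ i, m i) :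
    dens n (notSumTwoSquares n) =
      1 - ∏ i, (1 - dens (m i) (notSumTwoSquares (m i))) := by
  subst hn
  have hpos : 0 < ∏ i, m i := Finset.prod_pos fun i _ => hm i
  have key : dens (∏ i, m i) (sumTwoSquares (∏ i, m i)) =
      ∏ i, dens (m i) (sumTwoSquares (m i)) := by
    unfold dens
    rw [card_sumTwoSquares_prod k m (fun i j h => hco i j h)]
    push_cast
    rw [Finset.prod_div_distrib]
  unfold notSumTwoSquares
  rw [dens_compl _ hpos]
  have : ∀ i ∈ Finset.univ, (1 - dens (m i) (sumTwoSquares (m i))ᶜ) =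
      dens (m i) (sumTwoSquares (m i)) := by
    intro i _
    rw [dens_compl _ (hm i)]; ring
  rw [Finset.prod_congr rfl this, key]
end

section
/- Let p be a prime with p ≡ 3 (mod 4) and let k ≥ 1 be an integer. Then |N_{p^k}| = (p^k − 1)/(p + 1) if k is even, and |N_{p^k}| = (p^k − p)/(p + 1) if k is odd. -/
lemma key_dvd {p : ℕ} (hp : p.Prime) (hp4 : p % 4 = 3) {a b : ℕ} (h : p ∣ a^2 + b^2) :
    p ∣ a ∧ p ∣ b := by
  haveI := Fact.mk hp
  have h1 : ((a:ZMod p))^2 + (b:ZMod p)^2 = 0 := by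
    have := (ZMod.natCast_eq_zero_iff (a^2+b^2) p).2 h
    push_cast at this; exact this
  have hnsq : ¬ IsSquare (-1 : ZMod p) := by
    rw [ZMod.exists_sq_eq_neg_one_iff]; simp [hp4]
  have hb : p ∣ b := by
    by_contra hb
    have hbz : (b : ZMod p) ≠ 0 := fun hz => hb ((ZMod.natCast_eq_zero_iff b p).1 hz)
    apply hnsq
    refine ⟨(a : ZMod p) * (b : ZMod p)⁻¹, ?_⟩
    have : ((a:ZMod p) * (b:ZMod p)⁻¹)^2 = -1 := by
      field_simp
      ring
      linear_combination h1
    rw [← this]; ring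
  refine ⟨?_, hb⟩
  have ha2 : p ∣ a^2 := by
    have hb2 : p ∣ b^2 := by rw [sq]; exact hb.mul_right b
    exact (Nat.dvd_add_iff_left hb2).2 h
  exact hp.dvd_of_dvd_pow ha2

lemma even_val_sq_add_sq {p : ℕ} (hp : p.Prime) (hp4 : p % 4 = 3) :
    ∀ n : ℕ, ∀ a b : ℕ, n = a^2 + b^2 → n ≠ 0 → Even (padicValNat p n) := by
  haveI := Fact.mk hp
  intro n
  induction n using Nat.strong_induction_on with
  | _ n ih =>
    intro a b hn hn0
    by_cases hpd : p ∣ n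
    · obtain ⟨hpa, hpb⟩ := key_dvd hp hp4 (hn ▸ hpd)
      obtain ⟨a', rfl⟩ := hpa
      obtain ⟨b', rfl⟩ := hpb
      have hm : n = p^2 * (a'^2 + b'^2) := by rw [hn]; ring
      have hm0 : a'^2 + b'^2 ≠ 0 := by
        intro h0; rw [h0, Nat.mul_zero] at hm; exact hn0 hm
      have hlt : a'^2 + b'^2 < n := by
        rw [hm]
        have : 1 < p^2 := by nlinarith [hp.two_le]
        exact lt_mul_of_one_lt_left (Nat.pos_of_ne_zero hm0) this |>.trans_eq rfl
      have := ih _ hlt a' b' rfl hm0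
      rw [hm, padicValNat.mul (pow_ne_zero 2 hp.ne_zero) hm0, padicValNat.prime_pow]
      exact (by norm_num : Even 2).add this
    · have : padicValNat p n = 0 := padicValNat.eq_zero_of_not_dvd hpd
      simp [this]

lemma unit_sum_sq {p : ℕ} (hp : p.Prime) (hp4 : p % 4 = 3) :
    ∀ j : ℕ, 1 ≤ j → ∀ u : ℤ, ¬ (p:ℤ) ∣ u →
    ∃ x y : ℤ, ¬ (p:ℤ) ∣ x ∧ (p:ℤ)^j ∣ x^2 + y^2 - u := by
  haveI := Fact.mk hp
  have hp2 : p ≠ 2 := by omega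
  intro j hj
  induction j, hj using Nat.le_induction with
  | base =>
    intro u hu
    obtain ⟨x0, y0, hxy⟩ := ZMod.sq_add_sq p ((u : ZMod p))
    have hdvd : (p:ℤ) ∣ (x0.val:ℤ)^2 + (y0.val:ℤ)^2 - u := by
      rw [← ZMod.intCast_zmod_eq_zero_iff_dvd]
      push_cast
      simp only [ZMod.natCast_val, ZMod.cast_id]
      rw [hxy]; ring
    by_cases hx : (p:ℤ) ∣ (x0.val:ℤ)
    · have hy : ¬ (p:ℤ) ∣ (y0.val:ℤ) := by
        intro hy
        apply hu
        have h2 : (p:ℤ) ∣ (x0.val:ℤ)^2 + (y0.val:ℤ)^2 :=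
          dvd_add (dvd_pow hx two_ne_zero) (dvd_pow hy two_ne_zero)
        have := dvd_sub h2 hdvd
        simpa using this
      refine ⟨(y0.val:ℤ), (x0.val:ℤ), hy, ?_⟩
      rw [pow_one, show (y0.val:ℤ)^2 + (x0.val:ℤ)^2 - u = (x0.val:ℤ)^2 + (y0.val:ℤ)^2 - u by ring]
      exact hdvd
    · exact ⟨_, _, hx, by rwa [pow_one]⟩
  | succ j hj ih =>
    intro u hu
    obtain ⟨x, y, hx, hd⟩ := ih u hu
    obtain ⟨c, hc⟩ := hd
    set t : ℤ := (((((-c : ℤ) : ZMod p) * ((2 * x : ℤ) : ZMod p)⁻¹ : ZMod p)).val : ℤ) with ht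
    have h2x : ((2 * x : ℤ) : ZMod p) ≠ 0 := by
      rw [Ne, ZMod.intCast_zmod_eq_zero_iff_dvd]
      intro h
      rcases (Int.Prime.dvd_mul' hp h) with h | h
      · have h2 : p ∣ 2 := by exact_mod_cast h
        exact hp2 ((Nat.prime_dvd_prime_iff_eq hp Nat.prime_two).1 h2)
      · exact hx h
    have hpt : (p:ℤ) ∣ 2 * x * t + c := by
      rw [← ZMod.intCast_zmod_eq_zero_iff_dvd]
      push_cast [ht] at h2x ⊢
      simp only [ZMod.natCast_val, ZMod.cast_id]
      have h2' : (2:ZMod p) ≠ 0 := left_ne_zero_of_mul h2x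
      have hx0 : (x:ZMod p) ≠ 0 := right_ne_zero_of_mul h2x
      field_simp
      ring
    refine ⟨x + t * (p:ℤ)^j, y, ?_, ?_⟩
    · intro h
      apply hx
      have h1 : (p:ℤ) ∣ t * (p:ℤ)^j := Dvd.dvd.mul_left (dvd_pow_self _ (by omega)) t
      have := dvd_sub h h1
      simpa using this
    · have key : (x + t * (p:ℤ)^j)^2 + y^2 - u
          = (p:ℤ)^j * (c + 2*x*t) + t^2 * ((p:ℤ)^j)^2 := by
        linear_combination hc
      rw [key]
      apply dvd_add
      · rw [pow_succ]
        exact mul_dvd_mul (dvd_refl ((p:ℤ)^j)) (by rw [add_comm c (2*x*t)]; exact hpt)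
      · have h1 : (p:ℤ)^(j+1) ∣ ((p:ℤ)^j)^2 := by
          rw [← pow_mul]
          exact pow_dvd_pow _ (by omega)
        exact h1.mul_left _

lemma mem_sumTwoSquares_iff {p : ℕ} (hp : p.Prime) (hp4 : p % 4 = 3) (k : ℕ)
    (m : ZMod (p^k)) :
    m ∈ sumTwoSquares (p^k) ↔ m = 0 ∨ Even (padicValNat p m.val) := by
  haveI := Fact.mk hp
  haveI : NeZero (p^k) := ⟨pow_ne_zero k hp.ne_zero⟩
  constructor
  · rintro ⟨x, y, hm⟩
    by_cases hm0 : m = 0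
    · exact Or.inl hm0
    right
    have hd : (((p^k : ℕ)):ℤ) ∣ ((x.val^2+y.val^2 : ℕ) : ℤ) - (m.val : ℤ) := by
      rw [← ZMod.intCast_zmod_eq_zero_iff_dvd]
      push_cast
      simp only [ZMod.natCast_val, ZMod.cast_id]
      linear_combination -hm
    have hval0 : m.val ≠ 0 := fun h => hm0 ((ZMod.val_eq_zero _).1 h)
    set N : ℕ := x.val^2 + y.val^2 with hN
    -- dvd transfer
    have htrans : ∀ j : ℕ, j ≤ k → (p^j ∣ m.val ↔ p^j ∣ N) := by
      intro j hj
      have hjk : (((p^j:ℕ)):ℤ) ∣ ((N:ℕ):ℤ) - (m.val:ℤ) :=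
        dvd_trans (Int.natCast_dvd_natCast.2 (pow_dvd_pow p hj)) hd
      constructor
      · intro h
        have : (((p^j:ℕ)):ℤ) ∣ ((N:ℕ):ℤ) := by
          have h' : (((p^j:ℕ)):ℤ) ∣ ((m.val:ℕ):ℤ) := Int.natCast_dvd_natCast.2 h
          simpa using dvd_add hjk h'
        exact_mod_cast this
      · intro h
        have : (((p^j:ℕ)):ℤ) ∣ ((m.val:ℕ):ℤ) := by
          have h' : (((p^j:ℕ)):ℤ) ∣ ((N:ℕ):ℤ) := Int.natCast_dvd_natCast.2 h
          simpa using dvd_sub h' hjk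
        exact_mod_cast this
    have hN0 : N ≠ 0 := by
      intro h0
      apply hval0
      have : p^k ∣ m.val := (htrans k le_rfl).2 (h0 ▸ dvd_zero _)
      exact Nat.eq_zero_of_dvd_of_lt this (ZMod.val_lt m)
    have hEv : Even (padicValNat p N) := even_val_sq_add_sq hp hp4 N x.val y.val rfl hN0
    have hwk : padicValNat p N < k := by
      by_contra hwk
      push_neg at hwk
      have h1 : p^k ∣ N := dvd_trans (pow_dvd_pow p hwk) pow_padicValNat_dvd
      have : p^k ∣ m.val := (htrans k le_rfl).2 h1
      exact hval0 (Nat.eq_zero_of_dvd_of_lt this (ZMod.val_lt m))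
    have heq : padicValNat p m.val = padicValNat p N := by
      apply le_antisymm
      · have hle : padicValNat p m.val < k := by
          by_contra hc
          push_neg at hc
          have h1 : p^k ∣ m.val := dvd_trans (pow_dvd_pow p hc) pow_padicValNat_dvd
          exact hval0 (Nat.eq_zero_of_dvd_of_lt h1 (ZMod.val_lt m))
        have := (htrans _ hle.le).1 pow_padicValNat_dvd
        exact (padicValNat_dvd_iff_le hN0).1 this
      · have := (htrans _ hwk.le).2 pow_padicValNat_dvd
        exact (padicValNat_dvd_iff_le hval0).1 this
    rw [heq]; exact hEv
  · rintro (rfl | hEv)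
    · exact ⟨0, 0, by ring⟩
    by_cases hm0 : m = 0
    · exact ⟨0, 0, by rw [hm0]; ring⟩
    have hval0 : m.val ≠ 0 := fun h => hm0 ((ZMod.val_eq_zero _).1 h)
    obtain ⟨i, hi⟩ := hEv
    set n := m.val with hn
    set u : ℕ := n / p ^ (padicValNat p n) with hu
    have hnu : p ^ (padicValNat p n) * u = n := by
      rw [hu, ← Nat.factorization_def n hp]
      exact Nat.ordProj_mul_ordCompl_eq_self n p
    have hpu : ¬ p ∣ u := by
      have := Nat.not_dvd_ordCompl hp hval0
      rwa [Nat.factorization_def n hp] at this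
    have hpu' : ¬ (p:ℤ) ∣ (u:ℤ) := fun h => hpu (Int.natCast_dvd_natCast.1 h)
    obtain ⟨X, Y, -, hXY⟩ := unit_sum_sq hp hp4 (max k 1) (le_max_right _ _) (u:ℤ) hpu'
    have hk' : (p:ℤ)^k ∣ X^2 + Y^2 - (u:ℤ) := dvd_trans (pow_dvd_pow _ (le_max_left _ _)) hXY
    refine ⟨(((p:ℤ)^i * X : ℤ) : ZMod (p^k)), (((p:ℤ)^i * Y : ℤ) : ZMod (p^k)), ?_⟩
    have hdvd : (((p^k:ℕ)):ℤ) ∣ ((p:ℤ)^i * X)^2 + ((p:ℤ)^i * Y)^2 - (n:ℤ) := by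
      have hn' : (n:ℤ) = (p:ℤ)^(2*i) * (u:ℤ) := by
        rw [← hnu, hi, two_mul]
        push_cast
        ring
      rw [hn']
      have : ((p:ℤ)^i * X)^2 + ((p:ℤ)^i * Y)^2 - (p:ℤ)^(2*i) * (u:ℤ)
          = (p:ℤ)^(2*i) * (X^2 + Y^2 - (u:ℤ)) := by ring
      rw [this]
      push_cast
      exact Dvd.dvd.mul_left hk' _
    have := (ZMod.intCast_zmod_eq_zero_iff_dvd _ (p^k)).2 hdvd
    push_cast at this
    have hmv : ((n:ℕ) : ZMod (p^k)) = m := by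
      simp [hn, ZMod.natCast_val, ZMod.cast_id]
    rw [← hmv]
    push_cast
    linear_combination -this

lemma notS_eq {p : ℕ} (hp : p.Prime) (hp4 : p % 4 = 3) (k : ℕ) :
    notSumTwoSquares (p^k) = {m : ZMod (p^k) | Odd (padicValNat p m.val)} := by
  haveI := Fact.mk hp
  haveI : NeZero (p^k) := ⟨pow_ne_zero k hp.ne_zero⟩
  ext m
  simp only [notSumTwoSquares, Set.mem_compl_iff, mem_sumTwoSquares_iff hp hp4, Set.mem_setOf_eq]
  constructor
  · intro h
    push_neg at h
    exact Nat.not_even_iff_odd.1 h.2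
  · intro h
    rintro (rfl | hE)
    · simp [ZMod.val_zero] at h
    · exact (Nat.not_odd_iff_even.2 hE) h

lemma card_notS {p : ℕ} (hp : p.Prime) (hp4 : p % 4 = 3) (k : ℕ) :
    Nat.card (notSumTwoSquares (p^k))
      = ((Finset.range (p^k)).filter fun n => Odd (padicValNat p n)).card := by
  classical
  haveI := Fact.mk hp
  haveI : NeZero (p^k) := ⟨pow_ne_zero k hp.ne_zero⟩
  rw [notS_eq hp hp4, Nat.card_coe_set_eq, Set.ncard_eq_toFinset_card',
    Set.toFinset_setOf]
  apply Finset.card_bij (fun m _ => m.val)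
  · intro a ha
    simp only [Finset.mem_filter, Finset.mem_univ, true_and] at ha
    simp only [Finset.mem_filter, Finset.mem_range]
    exact ⟨ZMod.val_lt a, ha⟩
  · intro a _ b _ h
    exact ZMod.val_injective _ h
  · intro b hb
    simp only [Finset.mem_filter, Finset.mem_range] at hb
    refine ⟨(b : ZMod (p^k)), ?_, ?_⟩
    · simp only [Finset.mem_filter, Finset.mem_univ, true_and]
      rw [ZMod.val_natCast_of_lt hb.1]
      exact hb.2
    · rw [ZMod.val_natCast_of_lt hb.1]

lemma filter_card_rec {p : ℕ} (hp : p.Prime) (k : ℕ) :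
    ((Finset.range (p^(k+1))).filter fun n => Odd (padicValNat p n)).card
      + (((Finset.range (p^k)).filter fun n => Odd (padicValNat p n)).card + 1) = p^k := by
  classical
  haveI := Fact.mk hp
  have hppos : 0 < p := hp.pos
  have h1 : ((Finset.range (p^k)).filter fun m => ¬ Odd (padicValNat p m) ∧ m ≠ 0).card
      = ((Finset.range (p^(k+1))).filter fun n => Odd (padicValNat p n)).card := by
    apply Finset.card_bij (fun m _ => p * m)
    · intro a ha
      simp only [Finset.mem_filter, Finset.mem_range] at ha ⊢
      obtain ⟨halt, hae, ha0⟩ := ha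
      constructor
      · calc p * a < p * p^k := (Nat.mul_lt_mul_left hppos).2 halt
          _ = p^(k+1) := by ring
      · rw [padicValNat.mul hp.ne_zero ha0, padicValNat.self hp.one_lt, add_comm,
          Nat.odd_add_one]
        exact hae
    · intro a _ b _ h
      exact Nat.eq_of_mul_eq_mul_left hppos h
    · intro b hb
      simp only [Finset.mem_filter, Finset.mem_range] at hb
      obtain ⟨hblt, hbodd⟩ := hb
      have hb0 : b ≠ 0 := by
        intro h; rw [h] at hbodd; simp [padicValNat.zero] at hbodd
      have hpd : p ∣ b := by
        have h1le : 1 ≤ padicValNat p b := hbodd.pos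
        have := (padicValNat_dvd_iff_le hb0).2 h1le
        simpa using this
      obtain ⟨m, rfl⟩ := hpd
      have hm0 : m ≠ 0 := by rintro rfl; simp at hb0
      refine ⟨m, ?_, rfl⟩
      simp only [Finset.mem_filter, Finset.mem_range]
      rw [padicValNat.mul hp.ne_zero hm0, padicValNat.self hp.one_lt, add_comm,
        Nat.odd_add_one] at hbodd
      refine ⟨?_, hbodd, hm0⟩
      have : p * m < p * p^k := by rw [pow_succ] at hblt; linarith [hblt]
      exact Nat.lt_of_mul_lt_mul_left this
  have h2 : ((Finset.range (p^k)).filter fun n => Odd (padicValNat p n)).card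
      + ((Finset.range (p^k)).filter fun n => ¬ Odd (padicValNat p n)).card = p^k := by
    rw [Finset.card_filter_add_card_filter_not, Finset.card_range]
  have h3 : ((Finset.range (p^k)).filter fun n => ¬ Odd (padicValNat p n))
      = insert 0 ((Finset.range (p^k)).filter fun m => ¬ Odd (padicValNat p m) ∧ m ≠ 0) := by
    ext m
    simp only [Finset.mem_filter, Finset.mem_range, Finset.mem_insert]
    constructor
    · intro ⟨h1, h2⟩
      by_cases hm : m = 0
      · exact Or.inl hm
      · exact Or.inr ⟨h1, h2, hm⟩
    · rintro (rfl | ⟨h1, h2, h3⟩)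
      · exact ⟨pow_pos hppos k, by simp [padicValNat.zero]⟩
      · exact ⟨h1, h2⟩
  have h4 : ((Finset.range (p^k)).filter fun n => ¬ Odd (padicValNat p n)).card
      = ((Finset.range (p^k)).filter fun m => ¬ Odd (padicValNat p m) ∧ m ≠ 0).card + 1 := by
    rw [h3, Finset.card_insert_of_notMem (by simp), add_comm]
  omega

lemma A_formula {p : ℕ} (hp : p.Prime) (k : ℕ) :
    (Even k → ((((Finset.range (p^k)).filter fun n => Odd (padicValNat p n)).card : ℚ)
      = ((p:ℚ)^k - 1)/((p:ℚ)+1))) ∧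
    (Odd k → ((((Finset.range (p^k)).filter fun n => Odd (padicValNat p n)).card : ℚ)
      = ((p:ℚ)^k - (p:ℚ))/((p:ℚ)+1))) := by
  classical
  have hp1 : (p:ℚ) + 1 ≠ 0 := by positivity
  induction k with
  | zero =>
    constructor
    · intro _
      rw [pow_zero]
      norm_num
    · intro h
      exact absurd h (by simp)
  | succ k ih =>
    have hrec := filter_card_rec hp k
    have hrecQ : ((((Finset.range (p^(k+1))).filter fun n => Odd (padicValNat p n)).card : ℚ))
        + (((((Finset.range (p^k)).filter fun n => Odd (padicValNat p n)).card : ℚ)) + 1)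
        = (p:ℚ)^k := by exact_mod_cast congrArg (Nat.cast (R := ℚ)) hrec
    rcases Nat.even_or_odd k with he | ho
    · have hAk := ih.1 he
      constructor
      · intro h
        exact absurd (Nat.even_add_one.1 h) (by simpa using he)
      · intro _
        rw [hAk] at hrecQ
        field_simp at hrecQ ⊢
        linear_combination hrecQ
    · have hAk := ih.2 ho
      constructor
      · intro _
        rw [hAk] at hrecQ
        field_simp at hrecQ ⊢
        linear_combination hrecQ
      · intro h
        rw [Nat.odd_add_one] at h
        exact absurd (ho) h

/-- For a prime `p ≡ 3 (mod 4)` and `k ≥ 1`, `|N_{p^k}| = (p^k − 1)/(p + 1)` if `k` is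
even and `|N_{p^k}| = (p^k − p)/(p + 1)` if `k` is odd. -/
theorem card_notSumTwoSquares_prime_pow (p : ℕ) (hp : p.Prime) (hp4 : p % 4 = 3)
    (k : ℕ) (hk : 1 ≤ k) :
    (Even k → (Nat.card (notSumTwoSquares (p ^ k)) : ℚ) = ((p : ℚ) ^ k - 1) / (p + 1)) ∧
    (Odd k → (Nat.card (notSumTwoSquares (p ^ k)) : ℚ) = ((p : ℚ) ^ k - p) / (p + 1)) := by
  rw [card_notS hp hp4 k]
  exact A_formula hp k
end

section
/- Let n be a positive integer. Then S_n = Z_n (every element of Z_n is a sum of two squares in Z_n) if and only if every prime p with p^2 dividing n satisfies p ≡ 1 (mod 4). -/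
/-- Identity: if `i^2 = -1` and `2` is invertible, every element is a sum of two squares. -/
lemma key_identity {R : Type*} [CommRing R] (i h m : R) (hi : i ^ 2 = -1) (h2 : 2 * h = 1) :
    ∃ x y : R, m = x ^ 2 + y ^ 2 := by
  refine ⟨(m + 1) * h, (m - 1) * h * i, ?_⟩
  linear_combination (-((m - 1) * h) ^ 2) * hi - m * (2 * h + 1) * h2

lemma exists_sqrt_neg_one (p : ℕ) (hp : p.Prime) (h4 : p % 4 = 1) :
    ∀ k : ℕ, ∃ i : ℤ, (p : ℤ) ^ k ∣ i ^ 2 + 1 := by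
  haveI : Fact p.Prime := ⟨hp⟩
  intro k
  induction k with
  | zero => exact ⟨0, by simp⟩
  | succ k ih =>
    rcases Nat.eq_zero_or_pos k with rfl | hk
    · obtain ⟨w, hw⟩ := ZMod.exists_sq_eq_neg_one_iff.mpr (by omega : p % 4 ≠ 3)
      refine ⟨(w.val : ℤ), ?_⟩
      rw [pow_one, ← ZMod.intCast_zmod_eq_zero_iff_dvd]
      push_cast
      rw [ZMod.natCast_val, ZMod.cast_id]
      linear_combination -hw
    · obtain ⟨i, c, hc⟩ := ih
      have hpk : (p : ℤ) ∣ (p : ℤ) ^ k := dvd_pow_self _ hk.ne'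
      have hpi : ¬ (p : ℤ) ∣ i := by
        intro hdvd
        have h1 : (p : ℤ) ∣ 1 := by
          have h2 : (p : ℤ) ∣ i ^ 2 + 1 := hpk.trans ⟨c, hc⟩
          have h3 : (p : ℤ) ∣ i ^ 2 := dvd_pow hdvd two_ne_zero
          simpa using h2.sub h3
        have := Int.le_of_dvd one_pos h1
        have := hp.two_le
        omega
      have hu : (2 * (i : ZMod p)) ≠ 0 := by
        intro h0
        have : ((2 * i : ℤ) : ZMod p) = 0 := by push_cast; exact h0
        rw [ZMod.intCast_zmod_eq_zero_iff_dvd] at this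
        rcases (Int.Prime.dvd_mul' hp this) with h | h
        · have h2 : (p : ℤ) ≤ 2 := Int.le_of_dvd two_pos h
          have := hp.two_le
          have : p ≤ 2 := by exact_mod_cast h2
          omega
        · exact hpi h
      have key : ∃ t : ℤ, (p : ℤ) ∣ c + 2 * i * t := by
        refine ⟨(((-(c : ZMod p)) * (2 * (i : ZMod p))⁻¹).val : ℤ), ?_⟩
        rw [← ZMod.intCast_zmod_eq_zero_iff_dvd]
        push_cast
        rw [ZMod.natCast_val, ZMod.cast_id]
        have hi0 : (i : ZMod p) ≠ 0 := right_ne_zero_of_mul hu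
        have h20 : (2 : ZMod p) ≠ 0 := left_ne_zero_of_mul hu
        field_simp
        ring
      obtain ⟨t, d, hd⟩ := key
      have e1 : (i + t * (p:ℤ)^k)^2 + 1
          = (p:ℤ)^k * (c + 2*i*t) + t^2 * ((p:ℤ)^k)^2 := by linear_combination hc
      refine ⟨i + t * (p:ℤ)^k, ?_⟩
      rw [e1, hd]
      apply dvd_add
      · exact ⟨d, by rw [pow_succ]; ring⟩
      · apply dvd_mul_of_dvd_right
        rw [← pow_mul]
        exact pow_dvd_pow _ (by omega)

/-- Every element of `ZMod (p^e)` is a sum of two squares when `p ≡ 1 (mod 4)`. -/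
lemma prime_pow_sum_sq (p e : ℕ) (hp : p.Prime) (h4 : p % 4 = 1)
    (m : ZMod (p ^ e)) : ∃ x y : ZMod (p ^ e), m = x ^ 2 + y ^ 2 := by
  obtain ⟨i, hi⟩ := exists_sqrt_neg_one p hp h4 e
  have hiR : ((i : ZMod (p ^ e)) : ZMod (p ^ e)) ^ 2 = -1 := by
    have h0 : ((i ^ 2 + 1 : ℤ) : ZMod (p ^ e)) = 0 := by
      rw [ZMod.intCast_zmod_eq_zero_iff_dvd]
      exact_mod_cast hi
    push_cast at h0
    linear_combination h0
  haveI : NeZero (p ^ e) := ⟨pow_ne_zero e hp.pos.ne'⟩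
  have hcop : Nat.Coprime 2 (p ^ e) :=
    ((Nat.coprime_primes Nat.prime_two hp).mpr (by omega)).pow_right e
  have hu : IsUnit ((2 : ℕ) : ZMod (p ^ e)) := (ZMod.isUnit_iff_coprime 2 (p ^ e)).mpr hcop
  obtain ⟨h, hh⟩ := isUnit_iff_exists_inv.mp hu
  exact key_identity _ h m hiR (by push_cast at hh ⊢; exact hh)

/-- Multiplicativity via CRT. -/
lemma mul_sum_sq (a b : ℕ) (hab : Nat.Coprime a b)
    (ha : ∀ m : ZMod a, ∃ x y : ZMod a, m = x ^ 2 + y ^ 2)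
    (hb : ∀ m : ZMod b, ∃ x y : ZMod b, m = x ^ 2 + y ^ 2) :
    ∀ m : ZMod (a * b), ∃ x y : ZMod (a * b), m = x ^ 2 + y ^ 2 := by
  intro m
  let e := ZMod.chineseRemainder hab
  obtain ⟨x1, y1, h1⟩ := ha (e m).1
  obtain ⟨x2, y2, h2⟩ := hb (e m).2
  refine ⟨e.symm (x1, x2), e.symm (y1, y2), e.injective ?_⟩
  rw [map_add, map_pow, map_pow, e.apply_symm_apply, e.apply_symm_apply]
  rw [Prod.ext_iff]
  constructor
  · simpa using h1
  · simpa using h2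

/-- For a positive integer `n`, every element of `ℤ/nℤ` is a sum of two squares iff
every prime `p` with `p² ∣ n` satisfies `p ≡ 1 (mod 4)`. -/
theorem sumTwoSquares_eq_univ_iff (n : ℕ) (hn : 0 < n) :
    sumTwoSquares n = Set.univ ↔ ∀ p : ℕ, p.Prime → p ^ 2 ∣ n → p % 4 = 1 := by
  constructor
  · intro h p hp hdvd
    haveI : Fact p.Prime := ⟨hp⟩
    haveI : NeZero (p ^ 2) := ⟨pow_ne_zero 2 hp.pos.ne'⟩
    have hall : ∀ t : ZMod (p ^ 2), ∃ x y : ZMod (p ^ 2), t = x ^ 2 + y ^ 2 := by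
      intro t
      have hm : ((t.val : ZMod n)) ∈ sumTwoSquares n := h ▸ Set.mem_univ _
      obtain ⟨x, y, hxy⟩ := hm
      refine ⟨ZMod.castHom hdvd (ZMod (p ^ 2)) x, ZMod.castHom hdvd (ZMod (p ^ 2)) y, ?_⟩
      have ht : ZMod.castHom hdvd (ZMod (p ^ 2)) ((t.val : ZMod n)) = t := by
        rw [map_natCast, ZMod.natCast_val, ZMod.cast_id]
      rw [← ht, hxy, map_add, map_pow, map_pow]
    by_contra hne
    rcases eq_or_ne p 2 with rfl | hp2
    · -- ZMod 4 : 3 is not a sum of two squares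
      obtain ⟨x, y, hxy⟩ := hall 3
      revert hxy
      revert x y
      decide
    · -- p % 4 = 3
      have h43 : p % 4 = 3 := by
        obtain ⟨k, rfl⟩ := hp.odd_of_ne_two hp2
        omega
      obtain ⟨x, y, hxy⟩ := hall (p : ZMod (p ^ 2))
      set a : ℤ := (x.val : ℤ)
      set b : ℤ := (y.val : ℤ)
      have h2 : (p : ℤ) ^ 2 ∣ a ^ 2 + b ^ 2 - p := by
        have h0 : ((a ^ 2 + b ^ 2 - p : ℤ) : ZMod (p ^ 2)) = 0 := by
          push_cast [a, b]
          rw [ZMod.natCast_val, ZMod.natCast_val, ZMod.cast_id, ZMod.cast_id]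
          rw [hxy]; ring
        rw [ZMod.intCast_zmod_eq_zero_iff_dvd] at h0
        exact_mod_cast h0
      have hpab : ((a : ZMod p)) ^ 2 + ((b : ZMod p)) ^ 2 = 0 := by
        have h1 : (p : ℤ) ∣ a ^ 2 + b ^ 2 := by
          have := (dvd_pow_self (p:ℤ) (two_ne_zero)).trans h2
          simpa using this.add (dvd_refl (p : ℤ))
        have h0 : ((a ^ 2 + b ^ 2 : ℤ) : ZMod p) = 0 := by
          rw [ZMod.intCast_zmod_eq_zero_iff_dvd]; exact_mod_cast h1
        push_cast at h0
        exact h0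
      have hbz : (b : ZMod p) = 0 := by
        by_contra hb0
        have : IsSquare (-1 : ZMod p) := by
          refine ⟨(a : ZMod p) * ((b : ZMod p))⁻¹, ?_⟩
          field_simp
          linear_combination -hpab
        exact (ZMod.exists_sq_eq_neg_one_iff.mp this) h43
      have haz : (a : ZMod p) = 0 := by
        have : ((a : ZMod p)) ^ 2 = 0 := by rw [← hpab, hbz]; ring
        exact pow_eq_zero_iff two_ne_zero |>.mp this
      rw [ZMod.intCast_zmod_eq_zero_iff_dvd] at hbz haz
      have hsq : (p : ℤ) ^ 2 ∣ a ^ 2 + b ^ 2 :=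
        dvd_add (pow_dvd_pow_of_dvd haz 2) (pow_dvd_pow_of_dvd hbz 2)
      have hpp : (p : ℤ) ^ 2 ∣ (p : ℤ) := by
        have := hsq.sub h2
        simpa using this
      have hle : (p : ℤ) ^ 2 ≤ (p : ℤ) :=
        Int.le_of_dvd (by exact_mod_cast hp.pos) hpp
      have hle' : p ^ 2 ≤ p := by exact_mod_cast hle
      have := hp.two_le
      nlinarith
  · intro H
    rw [Set.eq_univ_iff_forall]
    suffices h : ∀ n : ℕ, (∀ p : ℕ, p.Prime → p ^ 2 ∣ n → p % 4 = 1) →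
        ∀ m : ZMod n, ∃ x y : ZMod n, m = x ^ 2 + y ^ 2 by
      intro m; exact h n H m
    clear hn H n
    intro n
    induction n using Nat.recOnPosPrimePosCoprime with
    | prime_pow p e hp he =>
      intro H
      have hpn : p.Prime := hp
      rcases eq_or_ne e 1 with rfl | he1
      · rw [pow_one]
        intro m
        haveI : Fact p.Prime := ⟨hpn⟩
        obtain ⟨a, b, hab⟩ := ZMod.sq_add_sq p m
        exact ⟨a, b, hab.symm⟩
      · have h4 : p % 4 = 1 := H p hpn (pow_dvd_pow p (by omega))
        exact prime_pow_sum_sq p e hpn h4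
    | zero =>
      intro H
      exact absurd (H 2 Nat.prime_two (dvd_zero _)) (by norm_num)
    | one =>
      intro _ m
      exact ⟨0, 0, Subsingleton.elim _ _⟩
    | coprime a b ha hb hab iha ihb =>
      intro H
      exact mul_sum_sq a b hab
        (iha fun p pp hd => H p pp (hd.mul_right b))
        (ihb fun p pp hd => H p pp (hd.mul_left a))
end

section
/- With r(S_n) and r(N_n) the densities of S_n and N_n in Z_n, one has liminf_{n→∞} r(S_n) = 0, limsup_{n→∞} r(S_n) = 1, liminf_{n→∞} r(N_n) = 0, and limsup_{n→∞} r(N_n) = 1; in particular neither sequence converges. -/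
open Filter

/-- The density `r(S_n) = |S_n|/n` as a real number. -/
noncomputable def rS (n : ℕ) : ℝ := (Nat.card (sumTwoSquares n) : ℝ) / n

/-- The density `r(N_n) = |N_n|/n` as a real number. -/
noncomputable def rN (n : ℕ) : ℝ := (Nat.card (notSumTwoSquares n) : ℝ) / n

lemma card_S_add_card_N (n : ℕ) [NeZero n] :
    Nat.card (sumTwoSquares n) + Nat.card (notSumTwoSquares n) = n := by
  have := Set.ncard_add_ncard_compl (sumTwoSquares n)
  rw [Nat.card_coe_set_eq, Nat.card_coe_set_eq]
  simpa [notSumTwoSquares, Nat.card_eq_fintype_card, ZMod.card] using this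

lemma sumTwoSquares_prime (p : ℕ) [Fact p.Prime] : sumTwoSquares p = Set.univ := by
  ext m
  simp only [Set.mem_univ, iff_true, sumTwoSquares, Set.mem_setOf_eq]
  obtain ⟨a, b, h⟩ := ZMod.sq_add_sq p m
  exact ⟨a, b, h.symm⟩

lemma rS_prime (p : ℕ) (hp : p.Prime) : rS p = 1 := by
  have : Fact p.Prime := ⟨hp⟩
  rw [rS, sumTwoSquares_prime, Nat.card_coe_set_eq, Set.ncard_univ,
    Nat.card_eq_fintype_card, ZMod.card]
  exact div_self (by exact_mod_cast hp.pos.ne')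

lemma rN_prime (p : ℕ) (hp : p.Prime) : rN p = 0 := by
  have : Fact p.Prime := ⟨hp⟩
  rw [rN, notSumTwoSquares, sumTwoSquares_prime]
  simp

lemma card_S_mul {m n : ℕ} (h : m.Coprime n) :
    Nat.card (sumTwoSquares (m * n)) =
      Nat.card (sumTwoSquares m) * Nat.card (sumTwoSquares n) := by
  let e := ZMod.chineseRemainder h
  have hset : sumTwoSquares (m * n) = ⇑e ⁻¹' ((sumTwoSquares m) ×ˢ (sumTwoSquares n)) := by
    ext z
    constructor
    · rintro ⟨x, y, rfl⟩
      refine ⟨⟨(e x).1, (e y).1, ?_⟩, ⟨(e x).2, (e y).2, ?_⟩⟩ <;>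
        · rw [map_add, map_pow, map_pow]; rfl
    · rintro ⟨⟨a, b, hab⟩, ⟨c, d, hcd⟩⟩
      refine ⟨e.symm (a, c), e.symm (b, d), e.injective ?_⟩
      rw [map_add, map_pow, map_pow, RingEquiv.apply_symm_apply, RingEquiv.apply_symm_apply]
      ext
      · simpa using hab
      · simpa using hcd
  rw [hset]
  rw [show (⇑e : ZMod (m*n) → ZMod m × ZMod n) = ⇑e.toEquiv from rfl,
    ← Equiv.image_symm_eq_preimage e.toEquiv,
    Nat.card_image_of_injective e.toEquiv.symm.injective,
    Nat.card_congr (Equiv.Set.prod _ _), Nat.card_prod]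
lemma sq_add_sq_eq_zero_zmod {p : ℕ} [Fact p.Prime] (hp4 : p % 4 = 3) {a b : ZMod p}
    (h : a ^ 2 + b ^ 2 = 0) : a = 0 ∧ b = 0 := by
  have hns : ¬ IsSquare (-1 : ZMod p) := by
    rw [ZMod.exists_sq_eq_neg_one_iff]
    simp [hp4]
  by_cases hb : b = 0
  · subst hb
    constructor
    · have : a ^ 2 = 0 := by linear_combination h
      exact pow_eq_zero_iff (n := 2) (by norm_num) |>.mp this
    · rfl
  · exfalso
    apply hns
    refine ⟨a * b⁻¹, ?_⟩
    have hb2 : b ^ 2 ≠ 0 := pow_ne_zero _ hb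
    field_simp
    linear_combination -h

lemma mem_notSum_of_val {p : ℕ} (hp : p.Prime) (hp4 : p % 4 = 3) (k : ℕ) (hk1 : 1 ≤ k)
    (hk2 : k < p) : ((p * k : ℕ) : ZMod (p ^ 2)) ∈ notSumTwoSquares (p ^ 2) := by
  have : Fact p.Prime := ⟨hp⟩
  have hp2 : (p ^ 2 : ℕ) ≠ 0 := pow_ne_zero 2 hp.pos.ne'
  have : NeZero (p ^ 2) := ⟨hp2⟩
  intro hmem
  obtain ⟨x, y, hxy⟩ := hmem
  -- map down to ZMod p
  let π : ZMod (p ^ 2) →+* ZMod p := ZMod.castHom (dvd_pow_self p two_ne_zero) (ZMod p)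
  have h0 : (π x) ^ 2 + (π y) ^ 2 = 0 := by
    have := congrArg π hxy
    rw [map_natCast, map_add, map_pow, map_pow] at this
    have hpk : ((p * k : ℕ) : ZMod p) = 0 := by
      simp [Nat.cast_mul, ZMod.natCast_self]
    rw [hpk] at this
    exact this.symm
  obtain ⟨hx0, hy0⟩ := sq_add_sq_eq_zero_zmod hp4 h0
  -- p divides x.val and y.val
  have hxv : (p : ℕ) ∣ x.val := by
    have : ((x.val : ℕ) : ZMod p) = 0 := by
      rwa [show ((x.val : ℕ) : ZMod p) = π x by
        rw [ZMod.castHom_apply, ZMod.natCast_val]]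
    exact (ZMod.natCast_eq_zero_iff _ _).mp this
  have hyv : (p : ℕ) ∣ y.val := by
    have : ((y.val : ℕ) : ZMod p) = 0 := by
      rwa [show ((y.val : ℕ) : ZMod p) = π y by
        rw [ZMod.castHom_apply, ZMod.natCast_val]]
    exact (ZMod.natCast_eq_zero_iff _ _).mp this
  obtain ⟨u, hu⟩ := hxv
  obtain ⟨v, hv⟩ := hyv
  have hx : x = ((p * u : ℕ) : ZMod (p ^ 2)) := by
    rw [← hu, ZMod.natCast_val, ZMod.cast_id]
  have hy : y = ((p * v : ℕ) : ZMod (p ^ 2)) := by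
    rw [← hv, ZMod.natCast_val, ZMod.cast_id]
  have hzero : ((p * k : ℕ) : ZMod (p ^ 2)) = 0 := by
    rw [hxy, hx, hy]
    push_cast
    have hpp : ((p : ZMod (p ^ 2)) ^ 2) = 0 := by
      have := ZMod.natCast_self (p ^ 2)
      push_cast at this
      exact this
    ring_nf
    rw [hpp]
    ring
  rw [ZMod.natCast_eq_zero_iff] at hzero
  -- p^2 ∣ p * k with k < p : contradiction
  have : p ∣ k := by
    have := hzero
    rw [pow_two] at this
    exact (mul_dvd_mul_iff_left hp.pos.ne').mp this
  have := Nat.le_of_dvd (by omega) this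
  omega

lemma card_S_sq_le {p : ℕ} (hp : p.Prime) (hp4 : p % 4 = 3) :
    Nat.card (sumTwoSquares (p ^ 2)) + (p - 1) ≤ p ^ 2 := by
  have : Fact p.Prime := ⟨hp⟩
  have hp2 : (p ^ 2 : ℕ) ≠ 0 := pow_ne_zero 2 hp.pos.ne'
  have : NeZero (p ^ 2) := ⟨hp2⟩
  have hcards : Nat.card (sumTwoSquares (p ^ 2)) + Nat.card (notSumTwoSquares (p ^ 2)) = p ^ 2 :=
    card_S_add_card_N (p ^ 2)
  have hinj : ∃ g : Fin (p - 1) → (notSumTwoSquares (p ^ 2)), Function.Injective g := by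
    refine ⟨fun i => ⟨((p * (i.1 + 1) : ℕ) : ZMod (p ^ 2)),
      mem_notSum_of_val hp hp4 (i.1 + 1) (by omega) (by omega)⟩, ?_⟩
    intro i j hij
    have h1 : p * (i.1 + 1) < p ^ 2 := by
      have : i.1 + 1 ≤ p - 1 := by omega
      calc p * (i.1 + 1) ≤ p * (p - 1) := by exact Nat.mul_le_mul_left p (by omega)
        _ < p * p := Nat.mul_lt_mul_of_le_of_lt (le_refl p) (Nat.sub_lt hp.pos one_pos) hp.pos
        _ = p ^ 2 := (sq p).symm
    have h2 : p * (j.1 + 1) < p ^ 2 := by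
      calc p * (j.1 + 1) ≤ p * (p - 1) := by exact Nat.mul_le_mul_left p (by omega)
        _ < p * p := Nat.mul_lt_mul_of_le_of_lt (le_refl p) (Nat.sub_lt hp.pos one_pos) hp.pos
        _ = p ^ 2 := (sq p).symm
    have := congrArg (fun z : (notSumTwoSquares (p ^ 2)) => (z.1).val) hij
    simp only [ZMod.val_natCast_of_lt h1, ZMod.val_natCast_of_lt h2] at this
    have : i.1 = j.1 := by
      have := Nat.eq_of_mul_eq_mul_left hp.pos this
      omega
    exact Fin.ext this
  obtain ⟨g, hg⟩ := hinj
  have : p - 1 ≤ Nat.card (notSumTwoSquares (p ^ 2)) := by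
    have := Nat.card_le_card_of_injective g hg
    simpa using this
  omega

lemma sumTwoSquares_one : Nat.card (sumTwoSquares 1) = 1 := by
  have h : sumTwoSquares 1 = Set.univ := by
    ext z
    simp only [Set.mem_univ, iff_true]
    exact ⟨0, 0, Subsingleton.elim _ _⟩
  rw [h, Nat.card_coe_set_eq, Set.ncard_univ, Nat.card_eq_fintype_card, ZMod.card]

lemma card_S_prod (Q : Finset ℕ) (hQ : ∀ p ∈ Q, p.Prime) :
    Nat.card (sumTwoSquares (∏ p ∈ Q, p ^ 2)) =
      ∏ p ∈ Q, Nat.card (sumTwoSquares (p ^ 2)) := by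
  classical
  induction Q using Finset.induction_on with
  | empty => simpa using sumTwoSquares_one
  | @insert q s hq ih =>
      rw [Finset.prod_insert hq, Finset.prod_insert hq]
      have hco : (q ^ 2).Coprime (∏ p ∈ s, p ^ 2) :=
        Nat.Coprime.pow_left 2 <| Nat.Coprime.prod_right fun p hp =>
          Nat.Coprime.pow_right 2 <| (Nat.coprime_primes (hQ q (Finset.mem_insert_self q s))
            (hQ p (Finset.mem_insert_of_mem hp))).mpr (fun h => hq (h ▸ hp))
      rw [card_S_mul hco, ih (fun p hp => hQ p (Finset.mem_insert_of_mem hp))]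

lemma rS_nonneg (n : ℕ) : 0 ≤ rS n := div_nonneg (Nat.cast_nonneg _) (Nat.cast_nonneg _)

lemma rS_le_one (n : ℕ) : rS n ≤ 1 := by
  rcases Nat.eq_zero_or_pos n with h | h
  · subst h; simp [rS]
  · have : NeZero n := ⟨h.ne'⟩
    rw [rS, div_le_one (by exact_mod_cast h)]
    have : Nat.card (sumTwoSquares n) ≤ n := by
      have := card_S_add_card_N n
      omega
    exact_mod_cast this

lemma rN_eq (n : ℕ) (h : 0 < n) : rN n = 1 - rS n := by
  have : NeZero n := ⟨h.ne'⟩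
  have hc := card_S_add_card_N n
  rw [rN, rS]
  have hn : (n : ℝ) ≠ 0 := by exact_mod_cast h.ne'
  field_simp
  have : (Nat.card (notSumTwoSquares n) : ℝ) + (Nat.card (sumTwoSquares n) : ℝ) = n := by
    rw [← Nat.cast_add, Nat.add_comm, hc]
  linarith

lemma rS_prod_le (Q : Finset ℕ) (hQ : ∀ p ∈ Q, p.Prime ∧ p % 4 = 3) :
    rS (∏ p ∈ Q, p ^ 2) ≤ Real.exp (- ∑ p ∈ Q, 1 / (2 * (p : ℝ))) := by
  rw [rS, card_S_prod Q (fun p hp => (hQ p hp).1)]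
  push_cast
  rw [← Finset.prod_div_distrib]
  have hsum : (- ∑ p ∈ Q, 1 / (2 * (p:ℝ))) = ∑ p ∈ Q, -(1 / (2 * (p:ℝ))) := by
    rw [← Finset.sum_neg_distrib]
  rw [hsum, Real.exp_sum]
  apply Finset.prod_le_prod
  · intro p hp
    positivity
  · intro p hp
    obtain ⟨hp1, hp4⟩ := hQ p hp
    have hp3 : 3 ≤ p := by
      have := hp1.two_le
      omega
    have hp3R : (3 : ℝ) ≤ (p : ℝ) := by exact_mod_cast hp3
    have hcard : (Nat.card (sumTwoSquares (p ^ 2)) : ℝ) ≤ (p:ℝ)^2 - ((p:ℝ) - 1) := by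
      have h1 := card_S_sq_le hp1 hp4
      have : (Nat.card (sumTwoSquares (p ^ 2)) : ℝ) + ((p:ℝ) - 1) ≤ (p:ℝ)^2 := by
        have h2 : ((p - 1 : ℕ) : ℝ) = (p:ℝ) - 1 := by
          rw [Nat.cast_sub (by omega)]; norm_num
        have h3 : ((p^2 : ℕ) : ℝ) = (p:ℝ)^2 := by push_cast; ring
        calc (Nat.card (sumTwoSquares (p ^ 2)) : ℝ) + ((p:ℝ) - 1)
            = ((Nat.card (sumTwoSquares (p ^ 2)) + (p - 1) : ℕ) : ℝ) := by
              push_cast [h2]; ring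
          _ ≤ ((p^2 : ℕ) : ℝ) := by exact_mod_cast h1
          _ = (p:ℝ)^2 := h3
      linarith
    have hp2pos : (0:ℝ) < (p:ℝ)^2 := by positivity
    calc (Nat.card (sumTwoSquares (p ^ 2)) : ℝ) / (p:ℝ)^2
        ≤ ((p:ℝ)^2 - ((p:ℝ) - 1)) / (p:ℝ)^2 := by
          gcongr
      _ = 1 - ((p:ℝ) - 1)/(p:ℝ)^2 := by field_simp
      _ ≤ Real.exp (-(((p:ℝ) - 1)/(p:ℝ)^2)) := by
          have := Real.add_one_le_exp (-(((p:ℝ) - 1)/(p:ℝ)^2))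
          linarith
      _ ≤ Real.exp (-(1 / (2 * (p:ℝ)))) := by
          apply Real.exp_le_exp.mpr
          rw [neg_le_neg_iff, div_le_div_iff₀ (by positivity) (by positivity)]
          nlinarith

noncomputable def chi4 : DirichletCharacter ℂ 4 := (ZMod.χ₄).ringHomComp (Int.castRingHom ℂ)

lemma chi4_apply (a : ZMod 4) : chi4 a = ((ZMod.χ₄ a : ℤ) : ℂ) := rfl

lemma chi4_ne_one : chi4 ≠ 1 := by
  intro h
  have h3 : chi4 3 = 1 := by rw [h]; exact MulChar.one_apply (by decide)
  rw [chi4_apply, show ZMod.χ₄ 3 = -1 from by decide] at h3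
  norm_num at h3

lemma chi_abs_le (a : ZMod 4) : |((ZMod.χ₄ a : ℤ) : ℝ)| ≤ 1 := by
  rcases ZMod.isQuadratic_χ₄ a with h | h | h <;> rw [h] <;> norm_num

lemma G_bound : ∃ M : ℝ, ∀ x : ℝ, x ∈ Set.Ioc 1 2 →
    (∑' p : Nat.Primes, ((ZMod.χ₄ ((p : ℕ) : ZMod 4) : ℤ) : ℝ) * (p : ℝ) ^ (-x)) ≤ M := by
  -- maximum of the L-function norm on [1,2]
  have hcont : ContinuousOn (fun t : ℝ => ‖DirichletCharacter.LFunction chi4 (t : ℂ)‖)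
      (Set.Icc 1 2) :=
    (((DirichletCharacter.differentiable_LFunction chi4_ne_one).continuous.comp
      Complex.continuous_ofReal).norm).continuousOn
  obtain ⟨t₀, ht₀, hC⟩ := isCompact_Icc.exists_isMaxOn (s := Set.Icc (1:ℝ) 2)
    ⟨1, Set.left_mem_Icc.mpr one_le_two⟩ hcont
  set C : ℝ := ‖DirichletCharacter.LFunction chi4 (t₀ : ℂ)‖ with hCdef
  have hCpos : 0 < C := by
    have h2 : ‖DirichletCharacter.LFunction chi4 ((2:ℝ) : ℂ)‖ ≤ C :=
      hC (Set.mem_Icc.mpr ⟨one_le_two, le_refl 2⟩)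
    have hne : DirichletCharacter.LFunction chi4 ((2:ℝ) : ℂ) ≠ 0 := by
      apply DirichletCharacter.LFunction_ne_zero_of_one_le_re chi4 (Or.inl chi4_ne_one)
      simp [Complex.ofReal_re]
    have := norm_pos_iff.mpr hne
    linarith
  -- the remainder bound B
  have hBsum : Summable (fun p : Nat.Primes => ((p : ℝ) ^ 2)⁻¹) := by
    have h0 : Summable (fun n : ℕ => ((n : ℝ) ^ 2)⁻¹) := by
      have := Real.summable_one_div_nat_pow.mpr (le_refl 2)
      simpa [one_div] using this
    exact h0.comp_injective Subtype.val_injective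
  set B : ℝ := ∑' p : Nat.Primes, ((p : ℝ) ^ 2)⁻¹ with hBdef
  refine ⟨Real.log C + B, fun x hx => ?_⟩
  obtain ⟨hx1, hx2⟩ := hx
  -- basic summability
  have hsum0 : Summable (fun p : Nat.Primes => (p : ℝ) ^ (-x)) := by
    have h0 : Summable (fun n : ℕ => ((n : ℝ) ^ x)⁻¹) := Real.summable_nat_rpow_inv.mpr hx1
    have h1 : Summable (fun n : ℕ => (n : ℝ) ^ (-x)) := by
      refine h0.congr fun n => ?_
      rw [Real.rpow_neg (Nat.cast_nonneg n)]
    exact h1.comp_injective Subtype.val_injective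
  set r : Nat.Primes → ℝ := fun p => ((ZMod.χ₄ ((p : ℕ) : ZMod 4) : ℤ) : ℝ) * (p : ℝ) ^ (-x)
    with hrdef
  have hp2 : ∀ p : Nat.Primes, (2 : ℝ) ≤ (p : ℝ) := by
    intro p; exact_mod_cast p.2.two_le
  have hpow_le : ∀ p : Nat.Primes, (p : ℝ) ^ (-x) ≤ 1 / 2 := by
    intro p
    have h1 : (p : ℝ) ^ (-x) ≤ (2 : ℝ) ^ (-x) := by
      rw [Real.rpow_neg (by positivity), Real.rpow_neg (by norm_num)]
      have : (2:ℝ) ^ x ≤ (p:ℝ) ^ x :=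
        Real.rpow_le_rpow (by norm_num) (hp2 p) (by linarith)
      exact inv_anti₀ (Real.rpow_pos_of_pos (by norm_num) x) this
    have h2 : (2 : ℝ) ^ (-x) ≤ (2 : ℝ) ^ (-1 : ℝ) :=
      Real.rpow_le_rpow_of_exponent_le one_le_two (by linarith)
    have h3 : (2 : ℝ) ^ (-1 : ℝ) = 1 / 2 := by
      rw [Real.rpow_neg_one]; norm_num
    exact h1.trans (h2.trans_eq h3)
  have hr_abs : ∀ p : Nat.Primes, |r p| ≤ (p : ℝ) ^ (-x) := by
    intro p
    rw [hrdef]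
    simp only [abs_mul]
    have h2 : |(p : ℝ) ^ (-x)| = (p : ℝ) ^ (-x) := abs_of_nonneg (Real.rpow_nonneg (by positivity) _)
    rw [h2]
    calc |((ZMod.χ₄ ((p:ℕ) : ZMod 4) : ℤ) : ℝ)| * (p : ℝ) ^ (-x)
        ≤ 1 * (p : ℝ) ^ (-x) := by
          apply mul_le_mul_of_nonneg_right (chi_abs_le _)
          exact Real.rpow_nonneg (by positivity) _
      _ = (p : ℝ) ^ (-x) := one_mul _
  have hr_half : ∀ p : Nat.Primes, |r p| ≤ 1 / 2 := fun p => (hr_abs p).trans (hpow_le p)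
  set q : Nat.Primes → ℝ := fun p => -Real.log (1 - r p) with hqdef
  -- the key complex-log estimate
  have hkey : ∀ p : Nat.Primes, |r p - q p| ≤ ((p : ℝ) ^ 2)⁻¹ := by
    intro p
    have h1 : (0:ℝ) < 1 - r p := by
      have := abs_le.mp (hr_half p); linarith
    have h2 : r p - q p = (Complex.log (1 + -(r p : ℂ)) - (-(r p : ℂ))).re := by
      have hlog : Complex.log (1 - (r p : ℂ)) = ((Real.log (1 - r p) : ℝ) : ℂ) := by
        rw [show (1 - (r p : ℂ)) = ((1 - r p : ℝ) : ℂ) by push_cast; ring]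
        rw [← Complex.ofReal_log h1.le]
      rw [show (1 + -(r p : ℂ)) = 1 - (r p : ℂ) by ring, hlog]
      simp [hqdef]
      ring
    rw [h2]
    have h3 : ‖(-(r p : ℂ))‖ < 1 := by
      rw [norm_neg, Complex.norm_real, Real.norm_eq_abs]
      have := hr_half p; linarith
    calc |(Complex.log (1 + -(r p:ℂ)) - -(r p:ℂ)).re|
        ≤ ‖Complex.log (1 + -(r p:ℂ)) - -(r p:ℂ)‖ := Complex.abs_re_le_norm _
      _ ≤ ‖(-(r p:ℂ))‖ ^ 2 * (1 - ‖(-(r p:ℂ))‖)⁻¹ / 2 :=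
          Complex.norm_log_one_add_sub_self_le h3
      _ ≤ ((p : ℝ) ^ 2)⁻¹ := by
          rw [norm_neg, Complex.norm_real, Real.norm_eq_abs]
          have h4 : |r p| ≤ 1/2 := hr_half p
          have h5 : (1 - |r p|)⁻¹ ≤ 2 := by
            have := inv_anti₀ (by norm_num : (0:ℝ) < 1/2) (by linarith : 1/2 ≤ 1 - |r p|)
            norm_num at this
            linarith
          have h6 : |r p| ^ 2 ≤ ((p:ℝ)^2)⁻¹ := by
            have h7 : |r p| ≤ (p : ℝ)⁻¹ := by
              have := hr_abs p
              have h8 : (p:ℝ) ^ (-x) ≤ (p:ℝ)⁻¹ := by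
                have h9 : (p:ℝ) ^ (-x) ≤ (p:ℝ) ^ (-1:ℝ) :=
                  Real.rpow_le_rpow_of_exponent_le (by linarith [hp2 p]) (by linarith)
                rwa [Real.rpow_neg_one] at h9
              linarith
            calc |r p| ^ 2 ≤ ((p:ℝ)⁻¹) ^ 2 := by
                  apply pow_le_pow_left₀ (abs_nonneg _) h7
              _ = ((p:ℝ)^2)⁻¹ := by rw [inv_pow]
          calc |r p| ^ 2 * (1 - |r p|)⁻¹ / 2 ≤ |r p| ^ 2 * 2 / 2 := by
                gcongr
            _ = |r p| ^ 2 := by ring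
            _ ≤ ((p : ℝ) ^ 2)⁻¹ := h6
  -- summability of q
  have hq_sum : Summable q := by
    rw [← summable_abs_iff]
    apply Summable.of_nonneg_of_le (fun p => abs_nonneg _) _ (hsum0.mul_left 2)
    intro p
    have h1 : |q p| ≤ |r p| + |r p - q p| := by
      calc |q p| = |r p + -(r p - q p)| := by ring_nf
        _ ≤ |r p| + |-(r p - q p)| := abs_add_le _ _
        _ = |r p| + |r p - q p| := by rw [abs_neg]
    have h2 : |r p - q p| ≤ ((p:ℝ)^2)⁻¹ := hkey p
    have h3 : ((p:ℝ)^2)⁻¹ ≤ (p:ℝ)^(-x) := by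
      have hcast : ((p:ℝ)^2)⁻¹ = (p:ℝ) ^ (-(2:ℝ)) := by
        rw [Real.rpow_neg (by positivity), ← Real.rpow_natCast (p:ℝ) 2]
        norm_num
      rw [hcast]
      exact Real.rpow_le_rpow_of_exponent_le (by linarith [hp2 p]) (by linarith)
    have h4 := hr_abs p
    calc |q p| ≤ |r p| + |r p - q p| := h1
      _ ≤ (p:ℝ)^(-x) + (p:ℝ)^(-x) := by linarith
      _ = 2 * (p:ℝ)^(-x) := by ring
  have hr_sum : Summable r := by
    rw [← summable_abs_iff]
    exact Summable.of_nonneg_of_le (fun p => abs_nonneg _) hr_abs hsum0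
  set e : ℝ := ∑' p, q p with hedef
  -- Euler product identity
  have hs : 1 < ((x : ℂ)).re := by simpa using hx1
  have hEP := DirichletCharacter.LSeries_eulerProduct_exp_log chi4 hs
  have hterm : ∀ p : Nat.Primes,
      -Complex.log (1 - chi4 ((p:ℕ) : ZMod 4) * ((p:ℕ) : ℂ) ^ (-(x:ℂ))) = ((q p : ℝ) : ℂ) := by
    intro p
    have h1 : chi4 ((p:ℕ) : ZMod 4) * ((p:ℕ) : ℂ) ^ (-(x:ℂ)) = ((r p : ℝ) : ℂ) := by
      rw [chi4_apply]
      have h2 : (((p:ℕ) : ℂ)) ^ (-(x:ℂ)) = (((p:ℝ) ^ (-x) : ℝ) : ℂ) := by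
        rw [Complex.ofReal_cpow (by positivity : (0:ℝ) ≤ ((p:ℕ):ℝ))]
        push_cast
        ring_nf
      rw [h2, hrdef]
      push_cast
      ring
    rw [h1]
    have h3 : (0:ℝ) < 1 - r p := by
      have := abs_le.mp (hr_half p); linarith
    rw [show (1 : ℂ) - ((r p : ℝ) : ℂ) = ((1 - r p : ℝ) : ℂ) by push_cast; ring]
    rw [← Complex.ofReal_log h3.le, hqdef, Complex.ofReal_neg]
  have hEe : Complex.exp ((e : ℝ) : ℂ) = LSeries (fun n => chi4 n) (x : ℂ) := by
    rw [← hEP]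
    congr 1
    rw [hedef, Complex.ofReal_tsum]
    exact tsum_congr fun p => (hterm p).symm
  have hnorm : Real.exp e = ‖DirichletCharacter.LFunction chi4 ((x:ℝ) : ℂ)‖ := by
    have h1 : ‖Complex.exp ((e : ℝ) : ℂ)‖ = Real.exp e := by
      rw [Complex.norm_exp]
      simp
    rw [← h1, hEe, DirichletCharacter.LFunction_eq_LSeries chi4 hs]
  have he_le : e ≤ Real.log C := by
    rw [Real.le_log_iff_exp_le hCpos, hnorm]
    exact hC (Set.mem_Icc.mpr ⟨hx1.le, hx2⟩)
  -- conclude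
  have hG : ∑' p, r p ≤ e + B := by
    have h1 : ∑' p, r p - e = ∑' p, (r p - q p) := by
      rw [hedef, ← Summable.tsum_sub hr_sum hq_sum]
    have h2 : ∑' p, (r p - q p) ≤ B := by
      rw [hBdef]
      apply Summable.tsum_le_tsum _ (hr_sum.sub hq_sum) hBsum
      intro p
      calc r p - q p ≤ |r p - q p| := le_abs_self _
        _ ≤ ((p:ℝ)^2)⁻¹ := hkey p
    linarith
  calc ∑' p, r p ≤ e + B := hG
    _ ≤ Real.log C + B := by linarith

lemma not_summable_primes34 :
    ¬ Summable (fun n : ℕ => if n.Prime ∧ n % 4 = 3 then (1 / n : ℝ) else 0) := by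
  intro hf
  set f : ℕ → ℝ := fun n => if n.Prime ∧ n % 4 = 3 then (1 / n : ℝ) else 0 with hfdef
  have hf_nonneg : ∀ n, 0 ≤ f n := by
    intro n; rw [hfdef]; dsimp only; split <;> positivity
  obtain ⟨M, hM⟩ := G_bound
  set T : ℝ := ∑' n, f n with hTdef
  have hfsub : Summable (fun p : Nat.Primes => f (p : ℕ)) :=
    hf.comp_injective Subtype.val_injective
  have hT'le : ∑' p : Nat.Primes, f (p : ℕ) ≤ T := by
    rw [hTdef]
    exact Summable.tsum_subtype_le f {n | n.Prime} hf_nonneg hf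
  -- the uniform bound on F x
  have hFbound : ∀ x : ℝ, x ∈ Set.Ioc 1 2 →
      (∑' p : Nat.Primes, (p : ℝ) ^ (-x)) ≤ M + 2 * T + 1 := by
    intro x hx
    obtain ⟨hx1, hx2⟩ := hx
    have hp2 : ∀ p : Nat.Primes, (2 : ℝ) ≤ (p : ℝ) := by
      intro p; exact_mod_cast p.2.two_le
    have hsum0 : Summable (fun p : Nat.Primes => (p : ℝ) ^ (-x)) := by
      have h0 : Summable (fun n : ℕ => ((n : ℝ) ^ x)⁻¹) := Real.summable_nat_rpow_inv.mpr hx1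
      have h1 : Summable (fun n : ℕ => (n : ℝ) ^ (-x)) := by
        refine h0.congr fun n => ?_
        rw [Real.rpow_neg (Nat.cast_nonneg n)]
      exact h1.comp_injective Subtype.val_injective
    set r : Nat.Primes → ℝ := fun p => ((ZMod.χ₄ ((p : ℕ) : ZMod 4) : ℤ) : ℝ) * (p : ℝ) ^ (-x)
      with hrdef
    have hr_abs : ∀ p : Nat.Primes, |r p| ≤ (p : ℝ) ^ (-x) := by
      intro p
      rw [hrdef]
      simp only [abs_mul]
      rw [abs_of_nonneg (Real.rpow_nonneg (by positivity : (0:ℝ) ≤ (p:ℝ)) _)]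
      calc |((ZMod.χ₄ ((p:ℕ) : ZMod 4) : ℤ) : ℝ)| * (p : ℝ) ^ (-x)
          ≤ 1 * (p : ℝ) ^ (-x) :=
            mul_le_mul_of_nonneg_right (chi_abs_le _) (Real.rpow_nonneg (by positivity) _)
        _ = (p : ℝ) ^ (-x) := one_mul _
    have hr_sum : Summable r := by
      rw [← summable_abs_iff]
      exact Summable.of_nonneg_of_le (fun p => abs_nonneg _) hr_abs hsum0
    -- the single-point function
    classical
    set ep : Nat.Primes → ℝ := fun p => if p = (⟨2, Nat.prime_two⟩ : Nat.Primes) then 1 else 0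
      with hepdef
    have hep_sum : Summable ep := (hasSum_ite_eq (β := Nat.Primes) (⟨2, Nat.prime_two⟩ : Nat.Primes) (1:ℝ)).summable
    have hep_tsum : ∑' p, ep p = 1 := (hasSum_ite_eq (β := Nat.Primes) (⟨2, Nat.prime_two⟩ : Nat.Primes) (1:ℝ)).tsum_eq
    -- termwise bound
    have hterm : ∀ p : Nat.Primes,
        (p : ℝ) ^ (-x) - r p ≤ 2 * f (p : ℕ) + ep p := by
      intro p
      have hppos : (0:ℝ) < ((p:ℕ):ℝ) := by exact_mod_cast p.2.pos
      have hprime := p.2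
      rcases eq_or_ne (p : ℕ) 2 with h2 | h2
      · -- p = 2
        have hchi : (ZMod.χ₄ ((p:ℕ) : ZMod 4) : ℤ) = 0 := by
          rw [h2]; decide
        have hep1 : ep p = 1 := by
          rw [hepdef]; simp only; exact if_pos (Subtype.ext h2)
        have hrle : (p:ℝ) ^ (-x) ≤ 1 :=
          Real.rpow_le_one_of_one_le_of_nonpos (by linarith [hp2 p]) (by linarith)
        rw [hrdef]
        simp only [hchi]
        push_cast
        rw [zero_mul, sub_zero, hep1]
        have : 0 ≤ f (p:ℕ) := hf_nonneg _
        linarith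
      · -- p odd
        have hodd : (p : ℕ) % 2 = 1 := Nat.odd_iff.mp (hprime.odd_of_ne_two h2)
        have hep0 : ep p = 0 := by
          rw [hepdef]; simp only
          exact if_neg (fun h => h2 (congrArg Subtype.val h))
        have h4 : (p:ℕ) % 4 = 1 ∨ (p:ℕ) % 4 = 3 := by omega
        rcases h4 with h41 | h43
        · have hchi : (ZMod.χ₄ ((p:ℕ) : ZMod 4) : ℤ) = 1 := by
            have := ZMod.χ₄_nat_one_mod_four h41
            rwa [show ZMod.χ₄ ((p:ℕ) : ZMod 4) = ZMod.χ₄ ((p:ℕ)) from rfl]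
          rw [hrdef]
          simp only [hchi]
          push_cast
          rw [one_mul, sub_self, hep0]
          have : 0 ≤ f (p:ℕ) := hf_nonneg _
          linarith
        · have hchi : (ZMod.χ₄ ((p:ℕ) : ZMod 4) : ℤ) = -1 := by
            have := ZMod.χ₄_nat_three_mod_four h43
            rwa [show ZMod.χ₄ ((p:ℕ) : ZMod 4) = ZMod.χ₄ ((p:ℕ)) from rfl]
          have hfp : f (p : ℕ) = 1 / (p : ℕ) := by
            rw [hfdef]; simp only; rw [if_pos ⟨hprime, h43⟩]
          rw [hrdef]
          simp only [hchi]
          push_cast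
          rw [hep0, hfp]
          have hple : (p:ℝ) ^ (-x) ≤ 1 / (p:ℝ) := by
            have h9 : (p:ℝ) ^ (-x) ≤ (p:ℝ) ^ (-1:ℝ) :=
              Real.rpow_le_rpow_of_exponent_le (by linarith [hp2 p]) (by linarith)
            rw [Real.rpow_neg_one] at h9
            rw [one_div]
            exact h9
          push_cast
          linarith
    -- sum up
    have hsumRHS : Summable (fun p : Nat.Primes => 2 * f (p:ℕ) + ep p) :=
      (hfsub.mul_left 2).add hep_sum
    have h1 : ∑' p : Nat.Primes, ((p : ℝ) ^ (-x) - r p) ≤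
        ∑' p : Nat.Primes, (2 * f (p:ℕ) + ep p) :=
      Summable.tsum_le_tsum hterm (hsum0.sub hr_sum) hsumRHS
    rw [Summable.tsum_sub hsum0 hr_sum, Summable.tsum_add (hfsub.mul_left 2) hep_sum, tsum_mul_left, hep_tsum] at h1
    have h2 := hM x ⟨hx1, hx2⟩
    have h3 : ∑' p : Nat.Primes, r p = ∑' p : Nat.Primes,
        ((ZMod.χ₄ ((p : ℕ) : ZMod 4) : ℤ) : ℝ) * (p : ℝ) ^ (-x) := rfl
    have h4 : ∑' p : Nat.Primes, f (p:ℕ) ≤ T := hT'le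
    linarith
  -- now derive a contradiction: partial sums of 1/p exceed any bound
  set M' : ℝ := M + 2 * T + 1 with hM'def
  have hexists : ∃ s : Finset Nat.Primes, M' + 1 < ∑ p ∈ s, (1 / (p : ℕ) : ℝ) := by
    by_contra hcon
    push_neg at hcon
    exact Nat.Primes.not_summable_one_div
      (summable_of_sum_le (fun p => by positivity) (fun s => hcon s))
  obtain ⟨s, hs⟩ := hexists
  -- continuity of the finite sum at x = 1
  have hcont : ContinuousAt (fun y : ℝ => ∑ p ∈ s, (p : ℝ) ^ (-y)) 1 := by
    apply tendsto_finset_sum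
    intro p _
    have hp0 : ((p : ℕ) : ℝ) ≠ 0 := by
      have := p.2.two_le; positivity
    exact (Real.continuousAt_const_rpow hp0).comp (continuous_neg.continuousAt)
  have hval : (∑ p ∈ s, (p : ℝ) ^ (-(1:ℝ))) = ∑ p ∈ s, (1 / (p : ℕ) : ℝ) := by
    apply Finset.sum_congr rfl
    intro p _
    rw [Real.rpow_neg_one, one_div]
  have htend : Tendsto (fun y : ℝ => ∑ p ∈ s, (p : ℝ) ^ (-y)) (nhdsWithin 1 (Set.Ioi 1))
      (nhds (∑ p ∈ s, (1 / (p : ℕ) : ℝ))) := by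
    rw [← hval]
    exact (hcont.tendsto).mono_left nhdsWithin_le_nhds
  have hev1 : ∀ᶠ y in nhdsWithin (1:ℝ) (Set.Ioi 1), M' + 1 / 2 < ∑ p ∈ s, (p : ℝ) ^ (-y) :=
    htend.eventually_const_lt (by linarith)
  have hev2 : ∀ᶠ y in nhdsWithin (1:ℝ) (Set.Ioi 1), y ∈ Set.Ioc (1:ℝ) 2 :=
    Ioc_mem_nhdsGT_of_mem (Set.left_mem_Ico.mpr one_lt_two)
  obtain ⟨y, hy1, hy2⟩ := (hev1.and hev2).exists
  have hF : (∑' p : Nat.Primes, (p : ℝ) ^ (-y)) ≤ M' := hFbound y hy2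
  have hsum0 : Summable (fun p : Nat.Primes => (p : ℝ) ^ (-y)) := by
    have h0 : Summable (fun n : ℕ => ((n : ℝ) ^ y)⁻¹) := Real.summable_nat_rpow_inv.mpr hy2.1
    have h1 : Summable (fun n : ℕ => (n : ℝ) ^ (-y)) := by
      refine h0.congr fun n => ?_
      rw [Real.rpow_neg (Nat.cast_nonneg n)]
    exact h1.comp_injective Subtype.val_injective
  have hsle : ∑ p ∈ s, (p : ℝ) ^ (-y) ≤ ∑' p : Nat.Primes, (p : ℝ) ^ (-y) :=
    Summable.sum_le_tsum s (fun p _ => Real.rpow_nonneg (by positivity) _) hsum0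
  linarith

lemma f34_nonneg : ∀ n : ℕ, 0 ≤ (if n.Prime ∧ n % 4 = 3 then (1 / n : ℝ) else 0) := by
  intro n; split <;> positivity

lemma tendsto_sum_primes34 :
    Tendsto (fun N => ∑ p ∈ (Finset.range N).filter (fun p => p.Prime ∧ p % 4 = 3),
      (1 / (p : ℝ))) atTop atTop := by
  have h := (not_summable_iff_tendsto_nat_atTop_of_nonneg f34_nonneg).mp not_summable_primes34
  refine h.congr fun N => ?_
  rw [Finset.sum_filter]

lemma primes34_infinite : {p : ℕ | p.Prime ∧ p % 4 = 3}.Infinite := by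
  by_contra hinf
  rw [Set.not_infinite] at hinf
  apply not_summable_primes34
  apply summable_of_finite_support
  apply Set.Finite.subset hinf
  intro n hn
  simp only [Function.mem_support] at hn
  by_contra hmem
  simp only [Set.mem_setOf_eq] at hmem
  rw [if_neg hmem] at hn
  exact hn rfl

/-- the modulus sequence -/
def nn (N : ℕ) : ℕ := ∏ p ∈ (Finset.range N).filter (fun p => p.Prime ∧ p % 4 = 3), p ^ 2

lemma tendsto_rS_nn : Tendsto (fun N => rS (nn N)) atTop (nhds 0) := by
  have hb : ∀ N, rS (nn N) ≤ Real.exp (- ∑ p ∈ (Finset.range N).filter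
      (fun p => p.Prime ∧ p % 4 = 3), 1 / (2 * (p:ℝ))) := by
    intro N
    exact rS_prod_le _ (fun p hp => (Finset.mem_filter.mp hp).2)
  have hS : Tendsto (fun N => ∑ p ∈ (Finset.range N).filter
      (fun p => p.Prime ∧ p % 4 = 3), 1 / (2 * (p:ℝ))) atTop atTop := by
    have h2 : ∀ N, ∑ p ∈ (Finset.range N).filter (fun p => p.Prime ∧ p % 4 = 3),
        1 / (2 * (p:ℝ)) = 2⁻¹ * ∑ p ∈ (Finset.range N).filter
        (fun p => p.Prime ∧ p % 4 = 3), (1 / (p : ℝ)) := by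
      intro N
      rw [Finset.mul_sum]
      apply Finset.sum_congr rfl
      intro p _
      ring
    simp only [h2]
    exact tendsto_sum_primes34.const_mul_atTop (by norm_num)
  have hexp : Tendsto (fun N => Real.exp (- ∑ p ∈ (Finset.range N).filter
      (fun p => p.Prime ∧ p % 4 = 3), 1 / (2 * (p:ℝ)))) atTop (nhds 0) :=
    Real.tendsto_exp_neg_atTop_nhds_zero.comp hS
  exact squeeze_zero (fun N => rS_nonneg _) hb hexp

lemma nn_tendsto : ∀ m : ℕ, ∀ᶠ N in atTop, m ≤ nn N := by
  intro m
  obtain ⟨P, hPmem, hPgt⟩ := primes34_infinite.exists_gt m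
  obtain ⟨hPprime, hP4⟩ := hPmem
  filter_upwards [eventually_ge_atTop (P + 1)] with N hN
  have hPin : P ∈ (Finset.range N).filter (fun p => p.Prime ∧ p % 4 = 3) :=
    Finset.mem_filter.mpr ⟨Finset.mem_range.mpr (by omega), hPprime, hP4⟩
  have h1 : P ^ 2 ≤ nn N := by
    apply Finset.single_le_prod' _ hPin
    intro q hq
    exact Nat.one_le_pow _ _ (Finset.mem_filter.mp hq).2.1.pos
  have : P ≤ P ^ 2 := by nlinarith [hPprime.pos]
  omega


/-- `liminf r(S_n) = 0`, `limsup r(S_n) = 1`, `liminf r(N_n) = 0`, `limsup r(N_n) = 1`;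
in particular neither sequence converges. -/
theorem liminf_limsup_dens_sumTwoSquares :
    liminf rS atTop = 0 ∧ limsup rS atTop = 1 ∧
    liminf rN atTop = 0 ∧ limsup rN atTop = 1 ∧
    (¬ ∃ L : ℝ, Tendsto rS atTop (nhds L)) ∧
    (¬ ∃ L : ℝ, Tendsto rN atTop (nhds L)) := by
  have hrN_nonneg : ∀ n, 0 ≤ rN n := fun n => div_nonneg (Nat.cast_nonneg _) (Nat.cast_nonneg _)
  have hrN_le_one : ∀ n, 1 ≤ n → rN n ≤ 1 := by
    intro n hn
    rw [rN_eq n hn]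
    linarith [rS_nonneg n]
  -- boundedness facts
  have hbS_above : IsBoundedUnder (· ≤ ·) atTop rS :=
    ⟨1, eventually_map.mpr (Eventually.of_forall rS_le_one)⟩
  have hbS_below : IsBoundedUnder (· ≥ ·) atTop rS :=
    ⟨0, eventually_map.mpr (Eventually.of_forall rS_nonneg)⟩
  have hbN_above : IsBoundedUnder (· ≤ ·) atTop rN :=
    ⟨1, eventually_map.mpr ((eventually_ge_atTop 1).mono hrN_le_one)⟩
  have hbN_below : IsBoundedUnder (· ≥ ·) atTop rN :=
    ⟨0, eventually_map.mpr (Eventually.of_forall hrN_nonneg)⟩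
  -- frequently small rS (and large rN)
  have hfreq_small : ∀ ε : ℝ, 0 < ε → ∃ᶠ n in atTop, rS n < ε ∧ 1 - ε < rN n := by
    intro ε hε
    rw [frequently_atTop]
    intro m
    have h1 : ∀ᶠ N in atTop, rS (nn N) < ε :=
      tendsto_rS_nn.eventually_lt_const hε
    have h2 : ∀ᶠ N in atTop, max m 1 ≤ nn N := nn_tendsto (max m 1)
    obtain ⟨N, hN1, hN2⟩ := (h1.and h2).exists
    refine ⟨nn N, by omega, hN1, ?_⟩
    have hpos : 1 ≤ nn N := by omega
    rw [rN_eq _ hpos]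
    linarith
  have hfreq_one : ∃ᶠ n in atTop, rS n = 1 ∧ rN n = 0 := by
    rw [frequently_atTop]
    intro m
    obtain ⟨p, hple, hp⟩ := Nat.exists_infinite_primes m
    exact ⟨p, hple, rS_prime p hp, rN_prime p hp⟩
  -- the four limit statements
  have hliminfS : liminf rS atTop = 0 := by
    apply le_antisymm
    · apply le_of_forall_pos_le_add
      intro ε hε
      have h := liminf_le_of_frequently_le ((hfreq_small ε hε).mono
        (fun n hn => hn.1.le)) hbS_below
      linarith
    · exact le_liminf_of_le hbS_above.isCoboundedUnder_ge
        (Eventually.of_forall rS_nonneg)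
  have hlimsupS : limsup rS atTop = 1 := by
    apply le_antisymm
    · exact limsup_le_of_le hbS_below.isCoboundedUnder_le
        (Eventually.of_forall rS_le_one)
    · exact le_limsup_of_frequently_le (hfreq_one.mono (fun n hn => hn.1.ge)) hbS_above
  have hliminfN : liminf rN atTop = 0 := by
    apply le_antisymm
    · exact liminf_le_of_frequently_le (hfreq_one.mono (fun n hn => hn.2.le)) hbN_below
    · exact le_liminf_of_le hbN_above.isCoboundedUnder_ge
        (Eventually.of_forall hrN_nonneg)
  have hlimsupN : limsup rN atTop = 1 := by
    apply le_antisymm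
    · exact limsup_le_of_le hbN_below.isCoboundedUnder_le
        ((eventually_ge_atTop 1).mono hrN_le_one)
    · apply le_of_forall_pos_le_add
      intro ε hε
      have h := le_limsup_of_frequently_le ((hfreq_small ε hε).mono
        (fun n hn => hn.2.le)) hbN_above
      linarith
  refine ⟨hliminfS, hlimsupS, hliminfN, hlimsupN, ?_, ?_⟩
  · rintro ⟨L, hL⟩
    have h1 := hL.liminf_eq
    have h2 := hL.limsup_eq
    rw [hliminfS] at h1
    rw [hlimsupS] at h2
    rw [← h1] at h2
    norm_num at h2
  · rintro ⟨L, hL⟩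
    have h1 := hL.liminf_eq
    have h2 := hL.limsup_eq
    rw [hliminfN] at h1
    rw [hlimsupN] at h2
    rw [← h1] at h2
    norm_num at h2
end

section
/- Let p be a prime with p ≡ 3 (mod 4). Then the densities r(N_{p^s}) = |N_{p^s}|/p^s converge to 1/(p+1) as s → ∞. -/
open Filter

section
variable {p : ℕ} (hp : p.Prime) (hp4 : p % 4 = 3)
include hp hp4

lemma zmod_aux (a b : ZMod p) (h : a ^ 2 + b ^ 2 = 0) : a = 0 ∧ b = 0 := by
  haveI : Fact p.Prime := ⟨hp⟩
  by_contra hc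
  have hab : a ≠ 0 ∨ b ≠ 0 := by tauto
  have key : ∀ a b : ZMod p, a ^ 2 + b ^ 2 = 0 → a ≠ 0 → False := by
    intro a b h ha
    have ha2 : a ^ 2 ≠ 0 := pow_ne_zero _ ha
    have hsq : IsSquare (-1 : ZMod p) := ⟨b / a, by
      rw [div_mul_div_comm]
      rw [eq_div_iff (by simpa using ha2)]
      linear_combination -h⟩
    exact ZMod.exists_sq_eq_neg_one_iff.mp hsq hp4
  rcases hab with ha | hb
  · exact absurd (key a b h ha) not_false
  · exact absurd (key b a (by linear_combination h) hb) not_false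

lemma int_dvd_aux (x y : ℤ) (h : (p:ℤ) ∣ x ^ 2 + y ^ 2) : (p:ℤ) ∣ x ∧ (p:ℤ) ∣ y := by
  have h' : ((x : ZMod p)) ^ 2 + ((y : ZMod p)) ^ 2 = 0 := by
    have := (ZMod.intCast_zmod_eq_zero_iff_dvd (x ^ 2 + y ^ 2) p).mpr h
    push_cast at this
    exact this
  obtain ⟨hx, hy⟩ := zmod_aux hp hp4 _ _ h'
  exact ⟨(ZMod.intCast_zmod_eq_zero_iff_dvd x p).mp hx,
    (ZMod.intCast_zmod_eq_zero_iff_dvd y p).mp hy⟩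

lemma pow_dvd_aux : ∀ (k : ℕ) (x y : ℤ), (p:ℤ) ^ (2 * k + 1) ∣ x ^ 2 + y ^ 2 →
    (p:ℤ) ^ (k + 1) ∣ x ∧ (p:ℤ) ^ (k + 1) ∣ y := by
  intro k
  induction k with
  | zero =>
    intro x y h
    simpa using int_dvd_aux hp hp4 x y (dvd_trans (dvd_pow_self _ one_ne_zero) h)
  | succ k ih =>
    intro x y h
    have hp1 : (p:ℤ) ∣ x ^ 2 + y ^ 2 := dvd_trans (dvd_pow_self _ (by omega)) h
    obtain ⟨hx, hy⟩ := int_dvd_aux hp hp4 x y hp1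
    obtain ⟨x', rfl⟩ := hx
    obtain ⟨y', rfl⟩ := hy
    have hps : (p:ℤ) ^ 2 ≠ 0 := pow_ne_zero _ (Int.natCast_ne_zero.mpr hp.ne_zero)
    have h2 : (p:ℤ) ^ (2 * k + 1) ∣ x' ^ 2 + y' ^ 2 := by
      have : (p:ℤ) ^ (2 * (k + 1) + 1) = (p:ℤ) ^ 2 * (p:ℤ) ^ (2 * k + 1) := by ring
      rw [this] at h
      have hxy : ((p:ℤ) * x') ^ 2 + ((p:ℤ) * y') ^ 2 = (p:ℤ)^2 * (x' ^ 2 + y' ^ 2) := by ring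
      rw [hxy] at h
      exact (mul_dvd_mul_iff_left hps).mp h
    obtain ⟨hx', hy'⟩ := ih x' y' h2
    constructor
    · have : (p:ℤ) ^ (k + 2) = (p:ℤ) * (p:ℤ) ^ (k + 1) := by ring
      rw [this]
      exact mul_dvd_mul_left _ hx'
    · have : (p:ℤ) ^ (k + 2) = (p:ℤ) * (p:ℤ) ^ (k + 1) := by ring
      rw [this]
      exact mul_dvd_mul_left _ hy'

end


section
variable {p : ℕ} (hp : p.Prime) (hp4 : p % 4 = 3)

-- every m not divisible by p is a sum of two squares mod p^t, with a a unit
lemma exists_rep (hp : p.Prime) (hp4 : p % 4 = 3) :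
    ∀ (t : ℕ) (m : ℤ), ¬ (p:ℤ) ∣ m →
    ∃ a b : ℤ, ¬ (p:ℤ) ∣ a ∧ (p:ℤ) ^ t ∣ a ^ 2 + b ^ 2 - m := by
  haveI : Fact p.Prime := ⟨hp⟩
  have hodd : p ≠ 2 := by omega
  have base : ∀ m : ℤ, ¬ (p:ℤ) ∣ m →
      ∃ a b : ℤ, ¬ (p:ℤ) ∣ a ∧ (p:ℤ) ^ 1 ∣ a ^ 2 + b ^ 2 - m := by
    intro m hm
    obtain ⟨a, b, hab⟩ := ZMod.sq_add_sq p ((m : ℤ) : ZMod p)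
    -- lift a b to ℤ
    obtain ⟨A, hA⟩ : ∃ A : ℤ, (A : ZMod p) = a := ⟨(a.val : ℤ), by simp⟩
    obtain ⟨B, hB⟩ : ∃ B : ℤ, (B : ZMod p) = b := ⟨(b.val : ℤ), by simp⟩
    have hdvd : (p:ℤ) ∣ A ^ 2 + B ^ 2 - m := by
      rw [← ZMod.intCast_zmod_eq_zero_iff_dvd]
      push_cast
      rw [hA, hB, hab]
      ring
    -- a, b not both divisible by p
    by_cases hA0 : (p:ℤ) ∣ A
    · by_cases hB0 : (p:ℤ) ∣ B
      · exfalso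
        apply hm
        have : (p:ℤ) ∣ A ^ 2 + B ^ 2 := by
          exact dvd_add (Dvd.dvd.pow hA0 two_ne_zero) (Dvd.dvd.pow hB0 two_ne_zero)
        have := dvd_sub this hdvd
        simpa using this
      · exact ⟨B, A, hB0, by simpa [pow_one, add_comm (B^2)] using hdvd⟩
    · exact ⟨A, B, hA0, by simpa [pow_one] using hdvd⟩
  intro t
  induction t with
  | zero =>
    intro m hm
    refine ⟨1, 0, ?_, by simp⟩
    intro h
    have h1 : (p:ℤ) ≤ 1 := Int.le_of_dvd one_pos h
    have := hp.two_le
    omega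
  | succ t ih =>
    intro m hm
    rcases Nat.eq_zero_or_pos t with rfl | ht
    · exact base m hm
    obtain ⟨a, b, ha, hab⟩ := ih m hm
    obtain ⟨d, hd⟩ := hab
    -- choose c with p ∣ 2*a*c + d
    have h2a : ((2 * a : ℤ) : ZMod p) ≠ 0 := by
      rw [Ne, ZMod.intCast_zmod_eq_zero_iff_dvd]
      intro h
      rcases (Int.Prime.dvd_mul' (hp) h) with h2 | h
      · have h1 : (p:ℤ) ≤ 2 := Int.le_of_dvd (by norm_num) h2
        have := hp.two_le
        omega
      · exact ha h
    obtain ⟨c, hc⟩ : ∃ c : ℤ, (p:ℤ) ∣ 2 * a * c + d := by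
      refine ⟨((-(d : ZMod p)) * ((2 * a : ℤ) : ZMod p)⁻¹ : ZMod p).val, ?_⟩
      rw [← ZMod.intCast_zmod_eq_zero_iff_dvd]
      push_cast at h2a ⊢
      rw [ZMod.natCast_val, ZMod.cast_id]
      field_simp
      simp [right_ne_zero_of_mul h2a, left_ne_zero_of_mul h2a]
    refine ⟨a + c * (p:ℤ) ^ t, b, ?_, ?_⟩
    · intro h
      apply ha
      have : (p:ℤ) ∣ c * (p:ℤ) ^ t := Dvd.dvd.mul_left (dvd_pow_self _ ht.ne') c
      have := dvd_sub h this
      simpa using this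
    · have expand : (a + c * (p:ℤ) ^ t) ^ 2 + b ^ 2 - m
          = (p:ℤ) ^ t * (d + 2 * a * c) + c ^ 2 * ((p:ℤ) ^ t) ^ 2 := by
        linear_combination hd
      rw [expand]
      apply dvd_add
      · rw [pow_succ]
        exact mul_dvd_mul_left _ (by rw [add_comm]; exact hc)
      · have : (p:ℤ) ^ (t + 1) ∣ ((p:ℤ) ^ t) ^ 2 := by
          rw [← pow_mul]
          exact pow_dvd_pow _ (by omega)
        exact Dvd.dvd.mul_left this _
end

lemma mem_iff {p : ℕ} (hp : p.Prime) (hp4 : p % 4 = 3) (s : ℕ) (n : ℕ) (hn : n < p ^ s) :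
    (n : ZMod (p ^ s)) ∈ sumTwoSquares (p ^ s) ↔ ¬ Odd (padicValNat p n) := by
  haveI : Fact p.Prime := ⟨hp⟩
  haveI : NeZero (p ^ s) := ⟨(pow_pos hp.pos s).ne'⟩
  constructor
  · rintro ⟨x, y, hxy⟩ hodd
    have hn0 : n ≠ 0 := by rintro rfl; simp [padicValNat.zero] at hodd
    obtain ⟨k, hk⟩ := hodd
    -- 2k+1 < s
    have hvlt : 2 * k + 1 < s := by
      have h1 : p ^ (2 * k + 1) ∣ n := hk ▸ pow_padicValNat_dvd
      have h2 : p ^ (2 * k + 1) ≤ n := Nat.le_of_dvd (Nat.pos_of_ne_zero hn0) h1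
      by_contra hcon
      have : p ^ s ≤ p ^ (2 * k + 1) := Nat.pow_le_pow_right hp.pos (by omega)
      omega
    -- lift to ℤ
    obtain ⟨X, hX⟩ : ∃ X : ℤ, (X : ZMod (p ^ s)) = x :=
      ⟨(x.val : ℤ), by push_cast; rw [ZMod.natCast_val, ZMod.cast_id]⟩
    obtain ⟨Y, hY⟩ : ∃ Y : ℤ, (Y : ZMod (p ^ s)) = y :=
      ⟨(y.val : ℤ), by push_cast; rw [ZMod.natCast_val, ZMod.cast_id]⟩
    have hmod : ((p : ℤ) ^ s) ∣ X ^ 2 + Y ^ 2 - n := by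
      have h0 : ((X ^ 2 + Y ^ 2 - n : ℤ) : ZMod (p ^ s)) = 0 := by
        push_cast
        rw [hX, hY, ← hxy]; ring
      have := (ZMod.intCast_zmod_eq_zero_iff_dvd _ (p ^ s)).mp h0
      exact_mod_cast this
    have hdvd1 : (p : ℤ) ^ (2 * k + 1) ∣ X ^ 2 + Y ^ 2 := by
      have hn' : (p : ℤ) ^ (2 * k + 1) ∣ (n : ℤ) := by
        exact_mod_cast Int.natCast_dvd_natCast.mpr (hk ▸ pow_padicValNat_dvd)
      have hps : (p : ℤ) ^ (2 * k + 1) ∣ X ^ 2 + Y ^ 2 - n :=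
        dvd_trans (by exact_mod_cast pow_dvd_pow (p:ℤ) (le_of_lt hvlt)) hmod
      have := dvd_add hps hn'
      simpa using this
    obtain ⟨hX2, hY2⟩ := pow_dvd_aux hp hp4 k X Y hdvd1
    have hdvd2 : (p : ℤ) ^ (2 * k + 2) ∣ X ^ 2 + Y ^ 2 := by
      obtain ⟨X', rfl⟩ := hX2
      obtain ⟨Y', rfl⟩ := hY2
      have : ((p:ℤ) ^ (k+1) * X') ^ 2 + ((p:ℤ) ^ (k+1) * Y') ^ 2
          = (p:ℤ) ^ (2*k+2) * (X' ^ 2 + Y' ^ 2) := by ring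
      rw [this]
      exact Dvd.intro _ rfl
    have hdvdn : (p : ℤ) ^ (2 * k + 2) ∣ (n : ℤ) := by
      have hps : (p : ℤ) ^ (2 * k + 2) ∣ X ^ 2 + Y ^ 2 - n :=
        dvd_trans (pow_dvd_pow (p:ℤ) (by omega)) hmod
      have := dvd_sub hdvd2 hps
      simpa using this
    have : p ^ (2 * k + 2) ∣ n := by exact_mod_cast hdvdn
    exact pow_succ_padicValNat_not_dvd hn0 (by rw [hk]; exact this)
  · intro heven
    rcases Nat.eq_zero_or_pos n with rfl | hn0
    · exact ⟨0, 0, by simp⟩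
    have heven' : Even (padicValNat p n) := Nat.not_odd_iff_even.mp heven
    obtain ⟨k, hk⟩ := heven'
    have hkv : padicValNat p n = 2 * k := by omega
    -- n = p^(2k) * m with ¬ p ∣ m
    set m : ℕ := n / p ^ (padicValNat p n) with hm
    have hmn : p ^ (2*k) * m = n := by
      rw [hm, ← hkv]
      exact Nat.mul_div_cancel' pow_padicValNat_dvd
    have hpm : ¬ p ∣ m := by
      rw [hm, ← Nat.factorization_def n hp]
      exact Nat.not_dvd_ordCompl hp hn0.ne'
    have hvlt : 2 * k < s := by
      have h2 : p ^ (2*k) ≤ n := Nat.le_of_dvd hn0 ⟨m, hmn.symm⟩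
      by_contra hcon
      have : p ^ s ≤ p ^ (2*k) := Nat.pow_le_pow_right hp.pos (by omega)
      omega
    obtain ⟨a, b, ha, hab⟩ := exists_rep hp hp4 (s - 2*k) (m : ℤ)
      (fun h => hpm (by exact_mod_cast h))
    refine ⟨((p:ℤ) ^ k * a : ℤ), ((p:ℤ) ^ k * b : ℤ), ?_⟩
    have key : ((p:ℤ) ^ s) ∣ ((p:ℤ)^k * a) ^ 2 + ((p:ℤ)^k * b) ^ 2 - n := by
      obtain ⟨d, hd⟩ := hab
      have hexp : ((p:ℤ)^k * a) ^ 2 + ((p:ℤ)^k * b) ^ 2 - n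
          = (p:ℤ) ^ (2*k) * (a ^ 2 + b ^ 2 - m) := by
        have : ((p:ℤ)^(2*k)) * (m:ℤ) = (n:ℤ) := by exact_mod_cast hmn
        linear_combination this
      rw [hexp, hd, ← mul_assoc, ← pow_add]
      have : 2 * k + (s - 2 * k) = s := by omega
      rw [this]
      exact Dvd.intro _ rfl
    have h0 : ((((p:ℤ)^k * a) ^ 2 + ((p:ℤ)^k * b) ^ 2 - n : ℤ) : ZMod (p ^ s)) = 0 := by
      rw [ZMod.intCast_zmod_eq_zero_iff_dvd]
      exact_mod_cast key
    push_cast at h0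
    push_cast
    linear_combination -h0


open Finset

def Tf (p s : ℕ) : Finset ℕ := (Finset.range (p ^ s)).filter fun n => Odd (padicValNat p n)

lemma card_Tf_zero (p : ℕ) : (Tf p 0).card = 0 := by
  simp only [Tf, pow_zero, Finset.range_one]
  rw [Finset.card_eq_zero, Finset.filter_eq_empty_iff]
  intro n hn
  simp only [Finset.mem_singleton] at hn
  subst hn
  simp [padicValNat.zero]

lemma card_Tf_recur {p : ℕ} (hp : p.Prime) (s : ℕ) :
    (Tf p (s + 1)).card + (Tf p s).card + 1 = p ^ s := by
  haveI : Fact p.Prime := ⟨hp⟩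
  have hvmul : ∀ m : ℕ, m ≠ 0 → padicValNat p (p * m) = padicValNat p m + 1 := by
    intro m hm
    rw [padicValNat.mul hp.ne_zero hm, padicValNat.self hp.one_lt, add_comm]
  have hb : (Tf p (s+1)).card
      = ((Finset.range (p ^ s)).filter fun m => ¬ Odd (padicValNat p m) ∧ m ≠ 0).card := by
    apply Finset.card_nbij' (fun n => n / p) (fun m => p * m)
    · intro n hn
      simp only [Tf, Finset.mem_coe, Finset.mem_filter, Finset.mem_range] at hn ⊢
      obtain ⟨hlt, hodd⟩ := hn
      have hn0 : n ≠ 0 := by rintro rfl; simp [padicValNat.zero] at hodd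
      have hdvd : p ∣ n := by
        by_contra hnd
        rw [padicValNat.eq_zero_of_not_dvd hnd] at hodd
        simp at hodd
      obtain ⟨m, rfl⟩ := hdvd
      have hm0 : m ≠ 0 := by rintro rfl; simp at hn0
      rw [Nat.mul_div_cancel_left _ hp.pos]
      rw [hvmul m hm0] at hodd
      refine ⟨?_, ?_, hm0⟩
      · rw [pow_succ'] at hlt
        exact (Nat.mul_lt_mul_left hp.pos).mp hlt
      · intro hodd'
        rw [Nat.odd_add_one] at hodd
        exact hodd hodd'
    · intro m hm
      simp only [Tf, Finset.mem_coe, Finset.mem_filter, Finset.mem_range] at hm ⊢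
      obtain ⟨hlt, hnotodd, hm0⟩ := hm
      constructor
      · calc p * m < p * p ^ s := by exact (Nat.mul_lt_mul_left hp.pos).mpr hlt
        _ = p ^ (s+1) := (pow_succ' p s).symm
      · rw [hvmul m hm0, Nat.odd_add_one]
        exact hnotodd
    · intro n hn
      simp only [Tf, Finset.mem_coe, Finset.mem_filter, Finset.mem_range] at hn
      obtain ⟨hlt, hodd⟩ := hn
      have hdvd : p ∣ n := by
        by_contra hnd
        rw [padicValNat.eq_zero_of_not_dvd hnd] at hodd
        simp at hodd
      exact Nat.mul_div_cancel' hdvd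
    · intro m hm
      exact Nat.mul_div_cancel_left _ hp.pos
  have hsplit : (Tf p s).card
      + ((Finset.range (p ^ s)).filter fun m => ¬ Odd (padicValNat p m)).card = p ^ s := by
    have := Finset.card_filter_add_card_filter_not
      (s := Finset.range (p ^ s)) (p := fun n => Odd (padicValNat p n))
    rw [Finset.card_range] at this
    exact this
  have hzero : (0 : ℕ) ∈ (Finset.range (p ^ s)).filter fun m => ¬ Odd (padicValNat p m) := by
    simp [pow_pos hp.pos, padicValNat.zero]
  have herase : ((Finset.range (p ^ s)).filter fun m => ¬ Odd (padicValNat p m) ∧ m ≠ 0)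
      = (((Finset.range (p ^ s)).filter fun m => ¬ Odd (padicValNat p m)).erase 0) := by
    ext m
    simp only [Finset.mem_filter, Finset.mem_erase, Finset.mem_range]
    tauto
  have := Finset.card_erase_add_one hzero
  rw [hb, herase]
  omega

lemma card_Tf_formula {p : ℕ} (hp : p.Prime) (s : ℕ) :
    ((Tf p s).card : ℤ) * (p + 1) = p ^ s - p ^ (s % 2) := by
  induction s with
  | zero => simp [card_Tf_zero]
  | succ s ih =>
    have h := card_Tf_recur hp s
    have hz : ((Tf p (s+1)).card : ℤ) = (p:ℤ) ^ s - 1 - (Tf p s).card := by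
      have := congrArg (Nat.cast : ℕ → ℤ) h
      push_cast at this
      linarith
    rw [hz]
    rcases Nat.mod_two_eq_zero_or_one s with hs | hs
    · rw [show (s+1) % 2 = 1 by omega]
      rw [hs] at ih
      rw [pow_zero] at ih
      rw [pow_one]
      linear_combination -ih
    · rw [show (s+1) % 2 = 0 by omega]
      rw [hs] at ih
      rw [pow_one] at ih
      rw [pow_zero]
      linear_combination -ih

lemma card_notSum {p : ℕ} (hp : p.Prime) (hp4 : p % 4 = 3) (s : ℕ) :
    Nat.card (notSumTwoSquares (p ^ s)) = (Tf p s).card := by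
  haveI : Fact p.Prime := ⟨hp⟩
  haveI : NeZero (p ^ s) := ⟨(pow_pos hp.pos s).ne'⟩
  classical
  have hset : notSumTwoSquares (p ^ s) = {m : ZMod (p ^ s) | Odd (padicValNat p m.val)} := by
    ext m
    have hm := ZMod.val_lt m
    have hcast : ((m.val : ℕ) : ZMod (p ^ s)) = m := by rw [ZMod.natCast_val, ZMod.cast_id]
    simp only [notSumTwoSquares, Set.mem_compl_iff, Set.mem_setOf_eq]
    conv_lhs => rw [← hcast]
    rw [mem_iff hp hp4 s m.val hm]
    exact not_not
  rw [hset]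
  rw [Nat.card_eq_fintype_card, ← Set.toFinset_card, Set.toFinset_setOf]
  apply Finset.card_nbij' (fun m => ZMod.val m) (fun n => (n : ZMod (p ^ s)))
  · intro m hm
    simp only [Finset.mem_coe, Finset.mem_filter, Finset.mem_univ, true_and] at hm
    simp only [Tf, Finset.mem_coe, Finset.mem_filter, Finset.mem_range]
    exact ⟨ZMod.val_lt m, hm⟩
  · intro n hn
    simp only [Tf, Finset.mem_coe, Finset.mem_filter, Finset.mem_range] at hn
    simp only [Finset.mem_coe, Finset.mem_filter, Finset.mem_univ, true_and]
    rw [ZMod.val_cast_of_lt hn.1]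
    exact hn.2
  · intro m _
    dsimp only
    rw [ZMod.natCast_val, ZMod.cast_id]
  · intro n hn
    simp only [Tf, Finset.mem_coe, Finset.mem_filter, Finset.mem_range] at hn
    exact ZMod.val_cast_of_lt hn.1

/-- For a prime `p ≡ 3 (mod 4)`, the densities `r(N_{p^s}) = |N_{p^s}|/p^s` converge to
`1/(p+1)` as `s → ∞`. -/
theorem tendsto_dens_notSumTwoSquares_prime_pow (p : ℕ) (hp : p.Prime) (hp4 : p % 4 = 3) :
    Tendsto (fun s : ℕ => (Nat.card (notSumTwoSquares (p ^ s)) : ℝ) / (p : ℝ) ^ s)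
      atTop (nhds (1 / ((p : ℝ) + 1))) := by
  have hp0 : (0 : ℝ) < p := by exact_mod_cast hp.pos
  have hp1 : (1 : ℝ) < p := by exact_mod_cast hp.one_lt
  have hps : ∀ s : ℕ, (0 : ℝ) < (p : ℝ) ^ s := fun s => pow_pos hp0 s
  have hp1' : (p : ℝ) + 1 ≠ 0 := by positivity
  have hcard : ∀ s : ℕ, (Nat.card (notSumTwoSquares (p ^ s)) : ℝ) * ((p : ℝ) + 1)
      = (p : ℝ) ^ s - (p : ℝ) ^ (s % 2) := by
    intro s
    have h1 := card_Tf_formula hp s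
    have h2 := card_notSum hp hp4 s
    rw [h2]
    exact_mod_cast congrArg (Int.cast : ℤ → ℝ) h1
  have heq : ∀ s : ℕ, (Nat.card (notSumTwoSquares (p ^ s)) : ℝ) / (p : ℝ) ^ s
      = (1 - (p : ℝ) ^ (s % 2) / (p : ℝ) ^ s) * (1 / ((p : ℝ) + 1)) := by
    intro s
    have hc : (Nat.card (notSumTwoSquares (p ^ s)) : ℝ)
        = ((p : ℝ) ^ s - (p : ℝ) ^ (s % 2)) / ((p : ℝ) + 1) := by
      rw [eq_div_iff hp1']; exact hcard s
    rw [hc, div_div, mul_comm ((p:ℝ) + 1) ((p:ℝ) ^ s), ← div_div, sub_div,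
      div_self (hps s).ne', div_eq_mul_inv, one_div]
  have hh : Tendsto (fun s : ℕ => (p : ℝ) ^ (s % 2) / (p : ℝ) ^ s) atTop (nhds 0) := by
    apply squeeze_zero (fun s => by positivity) (g := fun s : ℕ => (p : ℝ) * ((p : ℝ)⁻¹) ^ s)
    · intro s
      rw [div_eq_mul_inv, ← inv_pow]
      apply mul_le_mul_of_nonneg_right _ (by positivity)
      calc (p : ℝ) ^ (s % 2) ≤ (p : ℝ) ^ 1 :=
            pow_le_pow_right₀ (le_of_lt hp1) (Nat.le_of_lt_succ (Nat.mod_lt s (by norm_num)))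
        _ = (p : ℝ) := pow_one _
    · have : Tendsto (fun s : ℕ => ((p : ℝ)⁻¹) ^ s) atTop (nhds 0) :=
        tendsto_pow_atTop_nhds_zero_of_lt_one (by positivity) (inv_lt_one_of_one_lt₀ hp1)
      simpa using this.const_mul (p : ℝ)
  rw [show (1:ℝ) / ((p:ℝ) + 1) = (1 - 0) * (1 / ((p:ℝ) + 1)) by ring]
  exact Tendsto.congr (fun s => (heq s).symm)
    ((tendsto_const_nhds.sub hh).mul tendsto_const_nhds)
end

section
/- Let k ≥ 2, let m be an odd positive integer, and set n = 2^k · m. Suppose x is a nonnegative integer such that x mod 2^k ∈ N_{2^k} and (x − 2^i) mod n ∈ N_n for each i = 0, 1, ..., k−1. Then no nonnegative integer M with M ≡ x (mod n) can be written as M = a^2 + b^2 or as M = a^2 + b^2 + 2^j with a, b nonnegative integers and j ≥ 0. -/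
/-- Let `k ≥ 2`, `m` odd and positive, `n = 2^k ⬝ m`. If `x` is a nonnegative integer with
`x mod 2^k ∈ N_{2^k}` and `(x − 2^i) mod n ∈ N_n` for `i = 0, …, k−1`, then no
nonnegative integer `M ≡ x (mod n)` can be written as `a² + b²` or as `a² + b² + 2^j`. -/
theorem not_sq_add_sq_add_two_pow_of_conditions (k m : ℕ) (hk : 2 ≤ k) (hm : Odd m)
    (hm0 : 0 < m) (n : ℕ) (hn : n = 2 ^ k * m) (x : ℕ)
    (h1 : (x : ZMod (2 ^ k)) ∈ notSumTwoSquares (2 ^ k))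
    (h2 : ∀ i < k, ((x : ZMod n) - 2 ^ i) ∈ notSumTwoSquares n) :
    ∀ M : ℕ, M ≡ x [MOD n] →
      (¬ ∃ a b : ℕ, M = a ^ 2 + b ^ 2) ∧
      (¬ ∃ a b j : ℕ, M = a ^ 2 + b ^ 2 + 2 ^ j) := by
  intro M hM
  have hdvd : 2 ^ k ∣ n := hn ▸ dvd_mul_right _ _
  have hMk : ((M : ℕ) : ZMod (2 ^ k)) = x :=
    (ZMod.natCast_eq_natCast_iff _ _ _).mpr (hM.of_dvd hdvd)
  have hMn : ((M : ℕ) : ZMod n) = x :=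
    (ZMod.natCast_eq_natCast_iff _ _ _).mpr hM
  constructor
  · rintro ⟨a, b, rfl⟩
    refine h1 ⟨a, b, ?_⟩
    push_cast at hMk
    rw [← hMk]
  · rintro ⟨a, b, j, rfl⟩
    by_cases hj : j < k
    · refine h2 j hj ⟨a, b, ?_⟩
      push_cast at hMn
      rw [← hMn]
      ring
    · refine h1 ⟨a, b, ?_⟩
      have h2j : ((2 : ZMod (2 ^ k))) ^ j = 0 := by
        have : ((2 ^ j : ℕ) : ZMod (2 ^ k)) = 0 :=
          (ZMod.natCast_eq_zero_iff _ _).mpr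
            (pow_dvd_pow 2 (le_of_not_gt hj))
        push_cast at this
        exact this
      push_cast at hMk
      rw [← hMk, h2j, add_zero]
end

section
/- No nonnegative integer congruent to 23 modulo 72 can be written as a^2 + b^2 or as a^2 + b^2 + 2^j with a, b nonnegative integers and j ≥ 0. Consequently, the set of positive integers that cannot be written as a sum of two squares plus at most one power of 2 has lower asymptotic density at least 1/72. -/
open Filter

lemma e0' : ∀ a b : ZMod 8, a^2+b^2+1 ≠ 7 := by decide
lemma e1' : ∀ a b : ZMod 9, a^2+b^2+2 ≠ 5 := by decide
lemma e2' : ∀ a b : ZMod 8, a^2+b^2+4 ≠ 7 := by decide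
lemma e3' : ∀ a b : ZMod 8, a^2+b^2 ≠ 7 := by decide

lemma key' (M : ℕ) (hM : M % 72 = 23) :
    (¬ ∃ a b : ℕ, M = a ^ 2 + b ^ 2) ∧ (¬ ∃ a b j : ℕ, M = a ^ 2 + b ^ 2 + 2 ^ j) := by
  have h8 : M % 8 = 7 := by omega
  have h9 : M % 9 = 5 := by omega
  have c8 : (M : ZMod 8) = 7 := by
    rw [← ZMod.natCast_mod, h8]; rfl
  have c9 : (M : ZMod 9) = 5 := by
    rw [← ZMod.natCast_mod, h9]; rfl
  constructor
  · rintro ⟨a, b, rfl⟩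
    push_cast at c8
    exact e3' a b c8
  · rintro ⟨a, b, j, rfl⟩
    match j with
    | 0 => push_cast at c8; exact e0' a b (by linear_combination c8)
    | 1 => push_cast at c9; exact e1' a b (by linear_combination c9)
    | 2 => push_cast at c8; exact e2' a b (by linear_combination c8)
    | (j+3) =>
      push_cast at c8
      have hz : (2 : ZMod 8)^(j+3) = 0 := by
        rw [pow_add]; have h3 : (2:ZMod 8)^3 = 0 := by decide
        rw [h3, mul_zero]
      rw [hz, add_zero] at c8
      exact e3' a b c8

lemma countlem' (x : ℕ) :
    (x + 49) / 72 ≤ Nat.card (({M : ℕ | 0 < M ∧ (¬ ∃ a b : ℕ, M = a ^ 2 + b ^ 2) ∧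
        (¬ ∃ a b j : ℕ, M = a ^ 2 + b ^ 2 + 2 ^ j)} ∩ Set.Icc 1 x : Set ℕ)) := by
  set S := ({M : ℕ | 0 < M ∧ (¬ ∃ a b : ℕ, M = a ^ 2 + b ^ 2) ∧
        (¬ ∃ a b j : ℕ, M = a ^ 2 + b ^ 2 + 2 ^ j)} ∩ Set.Icc 1 x : Set ℕ) with hS
  set n := (x + 49) / 72 with hn
  have hfin : S.Finite := Set.Finite.inter_of_right (Set.finite_Icc 1 x) _
  have hsub : (fun i => 72 * i + 23) '' Set.Iio n ⊆ S := by
    rintro _ ⟨i, hi, rfl⟩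
    simp only [Set.mem_Iio] at hi
    have hmod : (72 * i + 23) % 72 = 23 := by omega
    have hle : 72 * i + 23 ≤ x := by
      have h2 := Nat.div_mul_le_self (x + 49) 72
      rw [← hn] at h2
      omega
    refine ⟨⟨?_, (key' _ hmod).1, (key' _ hmod).2⟩, Set.mem_Icc.mpr ⟨?_, hle⟩⟩
    · show 0 < 72 * i + 23; omega
    · show 1 ≤ 72 * i + 23; omega
  have h1 : n = Nat.card (Set.Iio n) := by simp
  calc n = Nat.card ((fun i => 72 * i + 23) '' Set.Iio n) := by
        rw [Nat.card_image_of_injective (fun a b h => by omega)]; exact h1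
    _ ≤ Nat.card S := Nat.card_mono hfin hsub

lemma dens' : (1 / 72 : ℝ) ≤ liminf (fun x : ℕ =>
      (Nat.card (({M : ℕ | 0 < M ∧ (¬ ∃ a b : ℕ, M = a ^ 2 + b ^ 2) ∧
        (¬ ∃ a b j : ℕ, M = a ^ 2 + b ^ 2 + 2 ^ j)} ∩ Set.Icc 1 x : Set ℕ)) : ℝ) / x)
      atTop := by
  set c : ℕ → ℕ := fun x =>
      Nat.card (({M : ℕ | 0 < M ∧ (¬ ∃ a b : ℕ, M = a ^ 2 + b ^ 2) ∧
        (¬ ∃ a b j : ℕ, M = a ^ 2 + b ^ 2 + 2 ^ j)} ∩ Set.Icc 1 x : Set ℕ)) with hc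
  set f : ℕ → ℝ := fun x => (c x : ℝ) / x with hf
  set g : ℕ → ℝ := fun x => 1 / 72 - (23 / 72) / x with hg
  have hcx : ∀ x : ℕ, c x ≤ x := by
    intro x
    have h1 : c x ≤ Nat.card (Set.Icc 1 x) :=
      Nat.card_mono (Set.finite_Icc 1 x) Set.inter_subset_right
    simpa using h1
  have hgf : ∀ᶠ x in atTop, g x ≤ f x := by
    filter_upwards [eventually_ge_atTop 1] with x hx
    have hx0 : (0 : ℝ) < x := by positivity
    have hcnt := countlem' x
    have hdiv : (x : ℝ) - 23 ≤ 72 * ((x + 49) / 72 : ℕ) := by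
      have h2 : x ≤ 72 * ((x + 49) / 72) + 23 := by omega
      have h3 := (Nat.cast_le (α := ℝ)).mpr h2
      push_cast at h3 ⊢
      linarith
    have hcn : ((x : ℝ) - 23) / 72 ≤ (c x : ℝ) := by
      have h4 := (Nat.cast_le (α := ℝ)).mpr hcnt
      linarith
    have h5 : ((x : ℝ) - 23) / 72 / x ≤ f x :=
      div_le_div_of_nonneg_right hcn hx0.le
    calc g x = ((x : ℝ) - 23) / 72 / x := by
          show (1 : ℝ) / 72 - 23 / 72 / x = _
          field_simp
      _ ≤ f x := h5
  have hgt : Tendsto g atTop (nhds (1 / 72 : ℝ)) := by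
    have h0 : Tendsto (fun x : ℕ => (23 / 72 : ℝ) / x) atTop (nhds 0) :=
      tendsto_const_div_atTop_nhds_zero_nat _
    have h1 := (tendsto_const_nhds (x := (1/72 : ℝ)) (f := atTop (α := ℕ))).sub h0
    simpa [hg] using h1
  have hbg : IsBoundedUnder (· ≥ ·) atTop g := hgt.isBoundedUnder_ge
  have hcf : IsCoboundedUnder (· ≥ ·) atTop f := by
    apply isCoboundedUnder_ge_of_eventually_le (x := (1 : ℝ)) atTop
    filter_upwards [eventually_ge_atTop 1] with x hx
    have hx0 : (0 : ℝ) < x := by positivity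
    show (c x : ℝ) / x ≤ 1
    rw [div_le_one hx0]
    exact_mod_cast hcx x
  calc (1 / 72 : ℝ) = liminf g atTop := hgt.liminf_eq.symm
    _ ≤ liminf f atTop := liminf_le_liminf hgf hbg hcf

/-- No nonnegative integer congruent to `23` mod `72` can be written as `a² + b²` or as
`a² + b² + 2^j`, and consequently the set of positive integers not expressible as a sum
of two squares plus at most one power of `2` has lower asymptotic density at least `1/72`. -/
theorem density_not_sq_add_sq_add_two_pow :
    (∀ M : ℕ, M % 72 = 23 →
      (¬ ∃ a b : ℕ, M = a ^ 2 + b ^ 2) ∧ (¬ ∃ a b j : ℕ, M = a ^ 2 + b ^ 2 + 2 ^ j)) ∧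
    (1 / 72 : ℝ) ≤ liminf (fun x : ℕ =>
      (Nat.card (({M : ℕ | 0 < M ∧ (¬ ∃ a b : ℕ, M = a ^ 2 + b ^ 2) ∧
        (¬ ∃ a b j : ℕ, M = a ^ 2 + b ^ 2 + 2 ^ j)} ∩ Set.Icc 1 x : Set ℕ)) : ℝ) / x)
      atTop := by
  exact ⟨key', dens'⟩
end
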